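/- arXiv:1411.0415 — 3 statements merged into one kernel-verified Lean document; each statement's English description precedes it below -/
import Mathlib

section
/- Let σ be a cyclic permutation of [n], let C_1, …, C_n be the chain decomposition of the intervals along σ, and let A be a collection of intervals along σ that does not contain the skew-butterfly poset S as a weak subposet. If C_i is of type 4, type 3^R or type 3^S and |A ∩ C_{i+1}| = 1, then C_{i+2} is of type 0, 1, 2 or 3^R (indices of chains taken modulo n); equivalently, |A ∩ C_{i+2}| ≤ 3, and C_{i+2} is neither of type 4, type 3^L nor type 3^S. -/
open Finset

/-- The family `𝒜` contains the skew-butterfly poset `S` as a (weak) subposet: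
five pairwise distinct sets `a, b, c, d, e ∈ 𝒜` with
`a ⊆ c`, `a ⊆ d`, `b ⊆ c`, `b ⊆ d` and `b ⊆ e ⊆ d`. -/
def ContainsSkewButterfly {n : ℕ} (𝒜 : Finset (Finset (Fin n))) : Prop :=
  ∃ a b c d e : Finset (Fin n),
    a ∈ 𝒜 ∧ b ∈ 𝒜 ∧ c ∈ 𝒜 ∧ d ∈ 𝒜 ∧ e ∈ 𝒜 ∧
    a ≠ b ∧ a ≠ c ∧ a ≠ d ∧ a ≠ e ∧ b ≠ c ∧ b ≠ d ∧ b ≠ e ∧ c ≠ d ∧ c ≠ e ∧ d ≠ e ∧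
    a ⊆ c ∧ a ⊆ d ∧ b ⊆ c ∧ b ⊆ d ∧ b ⊆ e ∧ e ⊆ d

/-- The interval `{x i, x (i+1), …, x (i+t)}` along the cyclic permutation `σ`
(indices taken modulo `n`). -/
def cycInterval (n : ℕ) (σ : ZMod n ≃ Fin n) (i : ZMod n) (t : ℕ) : Finset (Fin n) :=
  (Finset.range (t + 1)).image fun s : ℕ => σ (i + (s : ZMod n))

/-- `I` is an interval along the cyclic permutation `σ`; neither `∅` nor `[n]`
is an interval. -/
def IsCycInterval (n : ℕ) (σ : ZMod n ≃ Fin n) (I : Finset (Fin n)) : Prop :=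
  ∃ (i : ZMod n) (t : ℕ), t ≤ n - 2 ∧ I = cycInterval n σ i t

/-- The chain `C i` of the chain decomposition of the intervals along `σ`: it contains
exactly one interval of each size `1, 2, …, n - 1`, where the interval of size `2k` is
`{x (i-k), …, x (i+k-1)}` and the interval of size `2k+1` is `{x (i-k), …, x (i+k)}`. -/
def chainC (n : ℕ) (σ : ZMod n ≃ Fin n) (i : ZMod n) : Finset (Finset (Fin n)) :=
  (Finset.Icc 1 (n - 1)).image fun m => cycInterval n σ (i - ((m / 2 : ℕ) : ZMod n)) (m - 1)

/-- The chain `C` is of type `3^S`: exactly `3` sets of `𝒜` on `C`, whose sizes are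
not consecutive. -/
def Type3S {n : ℕ} (𝒜 C : Finset (Finset (Fin n))) : Prop :=
  (𝒜 ∩ C).card = 3 ∧ ¬ ∃ j : ℕ, (𝒜 ∩ C).image Finset.card = {j, j + 1, j + 2}

/-- The chain `C` is of type `3^R`: exactly `3` sets of `𝒜` on `C`, with consecutive sizes
`j, j+1, j+2` where `j` is odd (two of the sets have odd size). -/
def Type3R {n : ℕ} (𝒜 C : Finset (Finset (Fin n))) : Prop :=
  (𝒜 ∩ C).card = 3 ∧ ∃ j : ℕ, Odd j ∧ (𝒜 ∩ C).image Finset.card = {j, j + 1, j + 2}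

/-- The chain `C` is of type `3^L`: exactly `3` sets of `𝒜` on `C`, with consecutive sizes
`j, j+1, j+2` where `j` is even (two of the sets have even size). -/
def Type3L {n : ℕ} (𝒜 C : Finset (Finset (Fin n))) : Prop :=
  (𝒜 ∩ C).card = 3 ∧ ∃ j : ℕ, Even j ∧ (𝒜 ∩ C).image Finset.card = {j, j + 1, j + 2}

set_option maxHeartbeats 2000000 in
lemma core7 (x1 x2 x3 q t1 t2 t3 : ℕ) (h12 : x1 < x2) (h23 : x2 < x3)
    (g12 : t1 < t2) (g23 : t2 < t3)
    (hx : x2 = x1+1 → x3 = x2+1 → x1 % 2 = 1)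
    (ht : t2 = t1+1 → t3 = t2+1 → t1 % 2 = 0) :
    (t3 + x1%2 ≥ x1+4 ∧ x3 ≥ t1+3+t1%2)
  ∨ (x2 ≥ t1+3+t1%2 ∧ x3 ≥ t2+3+t2%2)
  ∨ (t3 + x2%2 ≥ x2+4 ∧ t2 + x1%2 ≥ x1+4)
  ∨ (q + x1%2 ≥ x1+2 ∧ t3 + x1%2 ≥ x1+4 ∧ q ≥ t1+1+t1%2)
  ∨ (x3 ≥ q+1+q%2 ∧ t3 + q%2 ≥ q+2 ∧ x3 ≥ t1+3+t1%2)
  ∨ (t3 + q%2 ≥ q+2 ∧ x3 ≥ q+1+q%2 ∧ t3 + x1%2 ≥ x1+4)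
  ∨ (q ≥ t1+1+t1%2 ∧ x3 ≥ t1+3+t1%2 ∧ q + x1%2 ≥ x1+2) := by
  omega

/-- the canonical chain element of size `m` on the chain centered at `j` -/
def cyc (n : ℕ) (σ : ZMod n ≃ Fin n) (j : ZMod n) (m : ℕ) : Finset (Fin n) :=
  cycInterval n σ (j - ((m / 2 : ℕ) : ZMod n)) (m - 1)

variable {n : ℕ} {σ : ZMod n ≃ Fin n} {a b j j' : ZMod n} {t t' m m' : ℕ} {I : Finset (Fin n)}

lemma cycInterval_card (ht : t + 1 ≤ n) : (cycInterval n σ a t).card = t + 1 := by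
  haveI : NeZero n := ⟨by omega⟩
  rw [cycInterval, Finset.card_image_of_injOn, Finset.card_range]
  intro s hs s' hs' h
  simp only [Finset.coe_range, Set.mem_Iio] at hs hs'
  have h2 : (s : ZMod n) = (s' : ZMod n) := add_left_cancel (σ.injective h)
  have e1 := ZMod.val_natCast_of_lt (n := n) (lt_of_lt_of_le hs ht)
  have e2 := ZMod.val_natCast_of_lt (n := n) (lt_of_lt_of_le hs' ht)
  rw [← e1, ← e2, h2]
  
lemma cyc_card (h1 : 1 ≤ m) (h2 : m ≤ n - 1) : (cyc n σ j m).card = m := by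
  have : m - 1 + 1 ≤ n := by omega
  rw [cyc, cycInterval_card this]; omega

lemma mem_chainC : I ∈ chainC n σ j ↔ ∃ m, 1 ≤ m ∧ m ≤ n - 1 ∧ I = cyc n σ j m := by
  simp only [chainC, Finset.mem_image, Finset.mem_Icc, cyc]
  constructor
  · rintro ⟨m, ⟨h1, h2⟩, rfl⟩; exact ⟨m, h1, h2, rfl⟩
  · rintro ⟨m, h1, h2, rfl⟩; exact ⟨m, ⟨h1, h2⟩, rfl⟩

lemma cycInterval_subset (d : ℕ) (hab : a = b + (d : ℕ)) (h : d + t ≤ t') :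
    cycInterval n σ a t ⊆ cycInterval n σ b t' := by
  intro y hy
  simp only [cycInterval, Finset.mem_image, Finset.mem_range] at hy ⊢
  obtain ⟨s, hs, rfl⟩ := hy
  refine ⟨d + s, by omega, ?_⟩
  congr 1
  rw [hab]; push_cast; ring

lemma cycInterval_inj (ht : t + 2 ≤ n) (a b : ZMod n)
    (h : cycInterval n σ a t = cycInterval n σ b t) : a = b := by
  haveI : NeZero n := ⟨by omega⟩
  have himg : ((Finset.range (t+1)).image fun s : ℕ => a + (s : ZMod n)) =
      ((Finset.range (t+1)).image fun s : ℕ => b + (s : ZMod n)) := by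
    apply Finset.image_injective σ.injective
    rw [Finset.image_image, Finset.image_image]
    exact h
  have key : ∀ x : ZMod n, ∀ c : ZMod n,
      x ∈ ((Finset.range (t+1)).image fun s : ℕ => c + (s : ZMod n)) →
      (x - 1) ∈ ((Finset.range (t+1)).image fun s : ℕ => c + (s : ZMod n)) ∨ x = c := by
    intro x c hx
    simp only [Finset.mem_image, Finset.mem_range] at hx ⊢
    obtain ⟨s, hs, rfl⟩ := hx
    rcases Nat.eq_zero_or_pos s with rfl | hpos
    · right; simp
    · left
      refine ⟨s - 1, by omega, ?_⟩
      have : ((s - 1 : ℕ) : ZMod n) = (s : ZMod n) - 1 := by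
        push_cast [Nat.cast_sub hpos]; ring
      rw [this]; ring
  -- a ∈ image for a, hence ∈ image for b
  have ha : a ∈ ((Finset.range (t+1)).image fun s : ℕ => b + (s : ZMod n)) := by
    rw [← himg]
    simp only [Finset.mem_image, Finset.mem_range]
    exact ⟨0, by omega, by simp⟩
  -- a - 1 ∉ image for a
  have hnot : (a - 1) ∉ ((Finset.range (t+1)).image fun s : ℕ => a + (s : ZMod n)) := by
    simp only [Finset.mem_image, Finset.mem_range]
    rintro ⟨s, hs, heq⟩
    have : ((s + 1 : ℕ) : ZMod n) = 0 := by
      push_cast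
      have : (s : ZMod n) = -1 := by linear_combination heq
      rw [this]; ring
    rw [ZMod.natCast_eq_zero_iff] at this
    have := Nat.le_of_dvd (by omega) this
    omega
  rcases key a b ha with h1 | h1
  · exact absurd (himg ▸ h1) hnot
  · exact h1

lemma cyc_inj (hn : 4 ≤ n) (h1 : 1 ≤ m) (h2 : m ≤ n - 1) (h1' : 1 ≤ m') (h2' : m' ≤ n - 1)
    (h : cyc n σ j m = cyc n σ j' m') : m = m' ∧ j = j' := by
  have hm : m = m' := by
    have c1 := cyc_card (σ := σ) (j := j) h1 h2
    have c2 := cyc_card (σ := σ) (j := j') h1' h2'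
    rw [h, c2] at c1; omega
  subst hm
  refine ⟨rfl, ?_⟩
  have := cycInterval_inj (t := m - 1) (by omega) _ _ h
  have h3 : j - ((m / 2 : ℕ) : ZMod n) + ((m / 2 : ℕ) : ZMod n)
      = j' - ((m / 2 : ℕ) : ZMod n) + ((m / 2 : ℕ) : ZMod n) := by rw [this]
  simpa using h3

lemma cyc_ne_size (h1 : 1 ≤ m) (h2 : m ≤ n - 1) (h1' : 1 ≤ m') (h2' : m' ≤ n - 1)
    (hms : m ≠ m') : cyc n σ j m ≠ cyc n σ j' m' := by
  intro h
  have c1 := cyc_card (σ := σ) (j := j) h1 h2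
  have c2 := cyc_card (σ := σ) (j := j') h1' h2'
  rw [h, c2] at c1; exact hms c1.symm

lemma cyc_ne_chain (hn : 4 ≤ n) (h1 : 1 ≤ m) (h2 : m ≤ n - 1) (h1' : 1 ≤ m') (h2' : m' ≤ n - 1)
    (hjj : j ≠ j') : cyc n σ j m ≠ cyc n σ j' m' := by
  intro h
  exact hjj (cyc_inj hn h1 h2 h1' h2' h).2

/-- subset going rightward by `δ` chains (or within a chain for `δ = 0`). -/
lemma subset_right (j j' : ZMod n) (δ m m' : ℕ) (hj : j' = j + (δ : ℕ)) (h1 : 1 ≤ m)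
    (hf : m / 2 + δ ≤ m' / 2) (hc : m' / 2 + m ≤ m' + m / 2 + δ) :
    cyc n σ j m ⊆ cyc n σ j' m' := by
  rw [cyc, cyc]
  apply cycInterval_subset (m' / 2 - m / 2 - δ) _ (by omega)
  have hnat : m / 2 + δ + (m' / 2 - m / 2 - δ) = m' / 2 := by omega
  have hcast : ((m / 2 : ℕ) : ZMod n) + ((δ : ℕ) : ZMod n) + ((m' / 2 - m / 2 - δ : ℕ) : ZMod n)
      = ((m' / 2 : ℕ) : ZMod n) := by
    rw [← Nat.cast_add, ← Nat.cast_add, hnat]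
  rw [hj]
  linear_combination -hcast

/-- subset going leftward by `δ` chains. -/
lemma subset_left (j j' : ZMod n) (δ m m' : ℕ) (hj : j' = j + (δ : ℕ)) (h1 : 1 ≤ m)
    (hf : m / 2 ≤ m' / 2 + δ) (hc : m' / 2 + δ + m ≤ m' + m / 2) :
    cyc n σ j' m ⊆ cyc n σ j m' := by
  rw [cyc, cyc]
  apply cycInterval_subset (δ + m' / 2 - m / 2) _ (by omega)
  have hnat : m / 2 + (δ + m' / 2 - m / 2) = δ + m' / 2 := by omega
  have hcast : ((m / 2 : ℕ) : ZMod n) + ((δ + m' / 2 - m / 2 : ℕ) : ZMod n)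
      = ((δ : ℕ) : ZMod n) + ((m' / 2 : ℕ) : ZMod n) := by
    rw [← Nat.cast_add, ← Nat.cast_add, hnat]
  rw [hj]
  linear_combination -hcast

section sorting
variable {P : ℕ → Prop}

lemma sort3 {m1 m2 m3 : ℕ} (hP1 : P m1) (hP2 : P m2) (hP3 : P m3)
    (h12 : m1 ≠ m2) (h13 : m1 ≠ m3) (h23 : m2 ≠ m3) :
    ∃ x1 x2 x3, x1 < x2 ∧ x2 < x3 ∧ P x1 ∧ P x2 ∧ P x3 ∧
      ({m1, m2, m3} : Finset ℕ) = {x1, x2, x3} := by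
  rcases Nat.lt_or_ge m1 m2 with a | a <;> rcases Nat.lt_or_ge m1 m3 with b | b <;>
    rcases Nat.lt_or_ge m2 m3 with c | c
  · exact ⟨m1, m2, m3, a, c, hP1, hP2, hP3, rfl⟩
  · exact ⟨m1, m3, m2, by omega, by omega, hP1, hP3, hP2, by ext u; simp; tauto⟩
  · omega
  · exact ⟨m3, m1, m2, by omega, by omega, hP3, hP1, hP2, by ext u; simp; tauto⟩
  · exact ⟨m2, m1, m3, by omega, by omega, hP2, hP1, hP3, by ext u; simp; tauto⟩
  · omega
  · exact ⟨m2, m3, m1, by omega, by omega, hP2, hP3, hP1, by ext u; simp; tauto⟩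
  · exact ⟨m3, m2, m1, by omega, by omega, hP3, hP2, hP1, by ext u; simp; tauto⟩

lemma sort4 {m1 m2 m3 m4 : ℕ} (hP1 : P m1) (hP2 : P m2) (hP3 : P m3) (hP4 : P m4)
    (h12 : m1 ≠ m2) (h13 : m1 ≠ m3) (h14 : m1 ≠ m4)
    (h23 : m2 ≠ m3) (h24 : m2 ≠ m4) (h34 : m3 ≠ m4) :
    ∃ y1 y2 y3 y4, y1 < y2 ∧ y2 < y3 ∧ y3 < y4 ∧ P y1 ∧ P y2 ∧ P y3 ∧ P y4 := by
  obtain ⟨x1, x2, x3, o12, o23, q1, q2, q3, hset⟩ := sort3 hP1 hP2 hP3 h12 h13 h23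
  have hx4 : m4 ≠ x1 ∧ m4 ≠ x2 ∧ m4 ≠ x3 := by
    have : m4 ∉ ({x1, x2, x3} : Finset ℕ) := by
      rw [← hset]; simp; omega
    simp at this; tauto
  obtain ⟨e1, e2, e3⟩ := hx4
  rcases Nat.lt_or_ge m4 x1 with a | a
  · exact ⟨m4, x1, x2, x3, by omega, o12, o23, hP4, q1, q2, q3⟩
  rcases Nat.lt_or_ge m4 x2 with b | b
  · exact ⟨x1, m4, x2, x3, by omega, by omega, o23, q1, hP4, q2, q3⟩
  rcases Nat.lt_or_ge m4 x3 with c | c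
  · exact ⟨x1, x2, m4, x3, o12, by omega, by omega, q1, q2, hP4, q3⟩
  · exact ⟨x1, x2, x3, m4, o12, o23, by omega, q1, q2, q3, hP4⟩

lemma pick_triple_R {y1 y2 y3 y4 : ℕ} (o1 : y1 < y2) (o2 : y2 < y3) (o3 : y3 < y4)
    (q1 : P y1) (q2 : P y2) (q3 : P y3) (q4 : P y4) :
    ∃ x1 x2 x3, x1 < x2 ∧ x2 < x3 ∧ P x1 ∧ P x2 ∧ P x3 ∧
      (x2 = x1 + 1 → x3 = x2 + 1 → x1 % 2 = 1) := by
  by_cases h : y3 = y2 + 1 ∧ y4 = y3 + 1 ∧ y2 % 2 = 0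
  · exact ⟨y1, y2, y3, o1, o2, q1, q2, q3, by omega⟩
  · refine ⟨y2, y3, y4, o2, o3, q2, q3, q4, ?_⟩
    intro c1 c2
    by_contra hodd
    exact h ⟨c1, c2, by omega⟩

lemma pick_triple_L {y1 y2 y3 y4 : ℕ} (o1 : y1 < y2) (o2 : y2 < y3) (o3 : y3 < y4)
    (q1 : P y1) (q2 : P y2) (q3 : P y3) (q4 : P y4) :
    ∃ x1 x2 x3, x1 < x2 ∧ x2 < x3 ∧ P x1 ∧ P x2 ∧ P x3 ∧
      (x2 = x1 + 1 → x3 = x2 + 1 → x1 % 2 = 0) := by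
  by_cases h : y3 = y2 + 1 ∧ y4 = y3 + 1 ∧ y2 % 2 = 1
  · exact ⟨y1, y2, y3, o1, o2, q1, q2, q3, by omega⟩
  · refine ⟨y2, y3, y4, o2, o3, q2, q3, q4, ?_⟩
    intro c1 c2
    by_contra heven
    exact h ⟨c1, c2, by omega⟩

end sorting

lemma triple_eq_consec {x1 x2 x3 j : ℕ} (h12 : x1 < x2) (h23 : x2 < x3)
    (h : ({x1, x2, x3} : Finset ℕ) = {j, j + 1, j + 2}) :
    x1 = j ∧ x2 = j + 1 ∧ x3 = j + 2 := by
  have e1 : x1 ∈ ({j, j+1, j+2} : Finset ℕ) := by rw [← h]; simp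
  have e2 : x2 ∈ ({j, j+1, j+2} : Finset ℕ) := by rw [← h]; simp
  have e3 : x3 ∈ ({j, j+1, j+2} : Finset ℕ) := by rw [← h]; simp
  simp only [Finset.mem_insert, Finset.mem_singleton] at e1 e2 e3
  omega

variable {𝒜 : Finset (Finset (Fin n))}

lemma mem_chain_size {A : Finset (Fin n)} (hA : A ∈ 𝒜 ∩ chainC n σ j) :
    ∃ m, (1 ≤ m ∧ m ≤ n - 1 ∧ cyc n σ j m ∈ 𝒜) ∧ A = cyc n σ j m ∧ A.card = m := by
  rw [Finset.mem_inter] at hA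
  obtain ⟨h1, h2⟩ := hA
  obtain ⟨m, b1, b2, rfl⟩ := mem_chainC.mp h2
  exact ⟨m, ⟨b1, b2, h1⟩, rfl, cyc_card b1 b2⟩

lemma extract3 (hcard : (𝒜 ∩ chainC n σ j).card = 3) :
    ∃ x1 x2 x3, x1 < x2 ∧ x2 < x3 ∧
      (1 ≤ x1 ∧ x1 ≤ n - 1 ∧ cyc n σ j x1 ∈ 𝒜) ∧
      (1 ≤ x2 ∧ x2 ≤ n - 1 ∧ cyc n σ j x2 ∈ 𝒜) ∧
      (1 ≤ x3 ∧ x3 ≤ n - 1 ∧ cyc n σ j x3 ∈ 𝒜) ∧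
      (𝒜 ∩ chainC n σ j).image Finset.card = {x1, x2, x3} := by
  obtain ⟨A, B, C, nAB, nAC, nBC, hset⟩ := Finset.card_eq_three.mp hcard
  have hA : A ∈ 𝒜 ∩ chainC n σ j := by rw [hset]; simp
  have hB : B ∈ 𝒜 ∩ chainC n σ j := by rw [hset]; simp
  have hC : C ∈ 𝒜 ∩ chainC n σ j := by rw [hset]; simp
  obtain ⟨mA, pA, eA, cA⟩ := mem_chain_size hA
  obtain ⟨mB, pB, eB, cB⟩ := mem_chain_size hB
  obtain ⟨mC, pC, eC, cC⟩ := mem_chain_size hC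
  have nab : mA ≠ mB := fun h => nAB (by rw [eA, eB, h])
  have nac : mA ≠ mC := fun h => nAC (by rw [eA, eC, h])
  have nbc : mB ≠ mC := fun h => nBC (by rw [eB, eC, h])
  obtain ⟨x1, x2, x3, o1, o2, q1, q2, q3, hperm⟩ :=
    sort3 (P := fun m => 1 ≤ m ∧ m ≤ n - 1 ∧ cyc n σ j m ∈ 𝒜) pA pB pC nab nac nbc
  refine ⟨x1, x2, x3, o1, o2, q1, q2, q3, ?_⟩
  rw [hset, Finset.image_insert, Finset.image_insert, Finset.image_singleton, cA, cB, cC]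
  exact hperm

lemma extract_ge4 (hcard : 4 ≤ (𝒜 ∩ chainC n σ j).card) :
    ∃ y1 y2 y3 y4, y1 < y2 ∧ y2 < y3 ∧ y3 < y4 ∧
      (1 ≤ y1 ∧ y1 ≤ n - 1 ∧ cyc n σ j y1 ∈ 𝒜) ∧
      (1 ≤ y2 ∧ y2 ≤ n - 1 ∧ cyc n σ j y2 ∈ 𝒜) ∧
      (1 ≤ y3 ∧ y3 ≤ n - 1 ∧ cyc n σ j y3 ∈ 𝒜) ∧
      (1 ≤ y4 ∧ y4 ≤ n - 1 ∧ cyc n σ j y4 ∈ 𝒜) := by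
  obtain ⟨t, hts, htc⟩ := Finset.exists_subset_card_eq hcard
  obtain ⟨A, hAt⟩ := Finset.card_pos.mp (by omega : 0 < t.card)
  have h3 : (t.erase A).card = 3 := by rw [Finset.card_erase_of_mem hAt, htc]
  obtain ⟨B, C, D, nBC, nBD, nCD, hset⟩ := Finset.card_eq_three.mp h3
  have hB' : B ∈ t.erase A := by rw [hset]; simp
  have hC' : C ∈ t.erase A := by rw [hset]; simp
  have hD' : D ∈ t.erase A := by rw [hset]; simp
  rw [Finset.mem_erase] at hB' hC' hD'
  obtain ⟨mA, pA, eA, cA⟩ := mem_chain_size (hts hAt)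
  obtain ⟨mB, pB, eB, cB⟩ := mem_chain_size (hts hB'.2)
  obtain ⟨mC, pC, eC, cC⟩ := mem_chain_size (hts hC'.2)
  obtain ⟨mD, pD, eD, cD⟩ := mem_chain_size (hts hD'.2)
  have nab : mA ≠ mB := fun h => hB'.1 (by rw [eA, eB, h])
  have nac : mA ≠ mC := fun h => hC'.1 (by rw [eA, eC, h])
  have nad : mA ≠ mD := fun h => hD'.1 (by rw [eA, eD, h])
  have nbc : mB ≠ mC := fun h => nBC (by rw [eB, eC, h])
  have nbd : mB ≠ mD := fun h => nBD (by rw [eB, eD, h])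
  have ncd : mC ≠ mD := fun h => nCD (by rw [eC, eD, h])
  exact sort4 (P := fun m => 1 ≤ m ∧ m ≤ n - 1 ∧ cyc n σ j m ∈ 𝒜) pA pB pC pD nab nac nad nbc nbd ncd

set_option maxHeartbeats 3000000 in
/-- If `C i` is of type `4`, `3^R` or `3^S` and `|𝒜 ∩ C (i+1)| = 1`, then `C (i+2)` is of
type `0`, `1`, `2` or `3^R`; i.e. `|𝒜 ∩ C (i+2)| ≤ 3` and `C (i+2)` is neither of type `4`
nor `3^L` nor `3^S`. -/
theorem skew_butterfly_chain_lemma2 (n : ℕ) (σ : ZMod n ≃ Fin n)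
    (𝒜 : Finset (Finset (Fin n))) (hInt : ∀ I ∈ 𝒜, IsCycInterval n σ I)
    (hS : ¬ ContainsSkewButterfly 𝒜) (i : ZMod n)
    (hi : (𝒜 ∩ chainC n σ i).card = 4 ∨ Type3R 𝒜 (chainC n σ i) ∨ Type3S 𝒜 (chainC n σ i))
    (hmid : (𝒜 ∩ chainC n σ (i + 1)).card = 1) :
    (𝒜 ∩ chainC n σ (i + 2)).card ≤ 3 ∧
      ¬ (𝒜 ∩ chainC n σ (i + 2)).card = 4 ∧
      ¬ Type3L 𝒜 (chainC n σ (i + 2)) ∧ ¬ Type3S 𝒜 (chainC n σ (i + 2)) := by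
  classical
  have hcard_i3 : 3 ≤ (𝒜 ∩ chainC n σ i).card := by
    rcases hi with h | ⟨h, _⟩ | ⟨h, _⟩ <;> omega
  have hn4 : 4 ≤ n := by
    have h1 : (𝒜 ∩ chainC n σ i).card ≤ (chainC n σ i).card :=
      Finset.card_le_card Finset.inter_subset_right
    have h2 : (chainC n σ i).card ≤ (Finset.Icc 1 (n - 1)).card := Finset.card_image_le
    have h3 : (Finset.Icc 1 (n - 1)).card = n - 1 + 1 - 1 := Nat.card_Icc 1 (n - 1)
    omega
  have h1ne : ((1 : ℕ) : ZMod n) ≠ 0 := by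
    intro h
    have hd := (ZMod.natCast_eq_zero_iff 1 n).mp h
    have := Nat.le_of_dvd (by norm_num) hd; omega
  have h2ne : ((2 : ℕ) : ZMod n) ≠ 0 := by
    intro h
    have hd := (ZMod.natCast_eq_zero_iff 2 n).mp h
    have := Nat.le_of_dvd (by norm_num) hd; omega
  have c01 : i ≠ i + 1 := by
    intro h; exact h1ne (by push_cast; linear_combination -h)
  have c02 : i ≠ i + 2 := by
    intro h; exact h2ne (by push_cast; linear_combination -h)
  have c12 : i + 1 ≠ i + 2 := by
    intro h; exact h1ne (by push_cast; linear_combination -h)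
  -- the unique set on the middle chain
  obtain ⟨Emid, hEset⟩ := Finset.card_eq_one.mp hmid
  have hEmem : Emid ∈ 𝒜 ∩ chainC n σ (i + 1) := by rw [hEset]; simp
  obtain ⟨q, ⟨hEa, hEb, hE⟩, hEeq, hEcard⟩ := mem_chain_size hEmem
  -- a good triple on chain i
  obtain ⟨x1, x2, x3, hx12, hx23, ⟨hX1a, hX1b, hX1⟩, ⟨hX2a, hX2b, hX2⟩, ⟨hX3a, hX3b, hX3⟩,
      hxprop⟩ :
      ∃ x1 x2 x3, x1 < x2 ∧ x2 < x3 ∧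
        (1 ≤ x1 ∧ x1 ≤ n - 1 ∧ cyc n σ i x1 ∈ 𝒜) ∧
        (1 ≤ x2 ∧ x2 ≤ n - 1 ∧ cyc n σ i x2 ∈ 𝒜) ∧
        (1 ≤ x3 ∧ x3 ≤ n - 1 ∧ cyc n σ i x3 ∈ 𝒜) ∧
        (x2 = x1 + 1 → x3 = x2 + 1 → x1 % 2 = 1) := by
    rcases hi with h | ⟨h3, j0, hodd, himg⟩ | ⟨h3, hno⟩
    · obtain ⟨y1, y2, y3, y4, o1, o2, o3, q1, q2, q3, q4⟩ := extract_ge4 (j := i) (𝒜 := 𝒜) (σ := σ) (by omega)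
      exact pick_triple_R (P := fun m => 1 ≤ m ∧ m ≤ n - 1 ∧ cyc n σ i m ∈ 𝒜) o1 o2 o3 q1 q2 q3 q4
    · obtain ⟨x1, x2, x3, o1, o2, q1, q2, q3, himg2⟩ := extract3 h3
      refine ⟨x1, x2, x3, o1, o2, q1, q2, q3, ?_⟩
      have hc := triple_eq_consec o1 o2 (himg2.symm.trans himg)
      rw [Nat.odd_iff] at hodd
      intro _ _; omega
    · obtain ⟨x1, x2, x3, o1, o2, q1, q2, q3, himg2⟩ := extract3 h3
      refine ⟨x1, x2, x3, o1, o2, q1, q2, q3, ?_⟩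
      intro c1 c2; exfalso
      exact hno ⟨x1, by rw [himg2, c2, c1]⟩
  -- the key step: no good triple can live on chain i+2
  have main : ∀ t1 t2 t3 : ℕ, t1 < t2 → t2 < t3 →
      (1 ≤ t1 ∧ t1 ≤ n - 1 ∧ cyc n σ (i + 2) t1 ∈ 𝒜) →
      (1 ≤ t2 ∧ t2 ≤ n - 1 ∧ cyc n σ (i + 2) t2 ∈ 𝒜) →
      (1 ≤ t3 ∧ t3 ≤ n - 1 ∧ cyc n σ (i + 2) t3 ∈ 𝒜) →
      (t2 = t1 + 1 → t3 = t2 + 1 → t1 % 2 = 0) → False := by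
    rintro t1 t2 t3 ht12 ht23 ⟨hY1a, hY1b, hY1⟩ ⟨hY2a, hY2b, hY2⟩ ⟨hY3a, hY3b, hY3⟩ htprop
    rcases core7 x1 x2 x3 q t1 t2 t3 hx12 hx23 ht12 ht23 hxprop htprop with
      ⟨d1, d2⟩ | ⟨d1, d2⟩ | ⟨d1, d2⟩ | ⟨d1, d2, d3⟩ | ⟨d1, d2, d3⟩ | ⟨d1, d2, d3⟩ | ⟨d1, d2, d3⟩
    · -- schema 1: a=X1 b=Y1 c=X3 d=Y3 e=Y2
      refine hS ⟨cyc n σ (i) x1, cyc n σ (i + 2) t1, cyc n σ (i) x3, cyc n σ (i + 2) t3, cyc n σ (i + 2) t2, hX1, hY1, hX3, hY3, hY2,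
        cyc_ne_chain hn4 hX1a hX1b hY1a hY1b c02,
        cyc_ne_size hX1a hX1b hX3a hX3b (by omega),
        cyc_ne_chain hn4 hX1a hX1b hY3a hY3b c02,
        cyc_ne_chain hn4 hX1a hX1b hY2a hY2b c02,
        cyc_ne_chain hn4 hY1a hY1b hX3a hX3b c02.symm,
        cyc_ne_size hY1a hY1b hY3a hY3b (by omega),
        cyc_ne_size hY1a hY1b hY2a hY2b (by omega),
        cyc_ne_chain hn4 hX3a hX3b hY3a hY3b c02,
        cyc_ne_chain hn4 hX3a hX3b hY2a hY2b c02,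
        cyc_ne_size hY3a hY3b hY2a hY2b (by omega),
        subset_right i i 0 x1 x3 (by simp) hX1a (by omega) (by omega),
        subset_right i (i + 2) 2 x1 t3 (by push_cast; ring) hX1a (by omega) (by omega),
        subset_left i (i + 2) 2 t1 x3 (by push_cast; ring) hY1a (by omega) (by omega),
        subset_right (i + 2) (i + 2) 0 t1 t3 (by simp) hY1a (by omega) (by omega),
        subset_right (i + 2) (i + 2) 0 t1 t2 (by simp) hY1a (by omega) (by omega),
        subset_right (i + 2) (i + 2) 0 t2 t3 (by simp) hY2a (by omega) (by omega)⟩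
    · -- schema 2: a=X1 b=Y1 c=X2 d=X3 e=Y2
      refine hS ⟨cyc n σ (i) x1, cyc n σ (i + 2) t1, cyc n σ (i) x2, cyc n σ (i) x3, cyc n σ (i + 2) t2, hX1, hY1, hX2, hX3, hY2,
        cyc_ne_chain hn4 hX1a hX1b hY1a hY1b c02,
        cyc_ne_size hX1a hX1b hX2a hX2b (by omega),
        cyc_ne_size hX1a hX1b hX3a hX3b (by omega),
        cyc_ne_chain hn4 hX1a hX1b hY2a hY2b c02,
        cyc_ne_chain hn4 hY1a hY1b hX2a hX2b c02.symm,
        cyc_ne_chain hn4 hY1a hY1b hX3a hX3b c02.symm,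
        cyc_ne_size hY1a hY1b hY2a hY2b (by omega),
        cyc_ne_size hX2a hX2b hX3a hX3b (by omega),
        cyc_ne_chain hn4 hX2a hX2b hY2a hY2b c02,
        cyc_ne_chain hn4 hX3a hX3b hY2a hY2b c02,
        subset_right i i 0 x1 x2 (by simp) hX1a (by omega) (by omega),
        subset_right i i 0 x1 x3 (by simp) hX1a (by omega) (by omega),
        subset_left i (i + 2) 2 t1 x2 (by push_cast; ring) hY1a (by omega) (by omega),
        subset_left i (i + 2) 2 t1 x3 (by push_cast; ring) hY1a (by omega) (by omega),
        subset_right (i + 2) (i + 2) 0 t1 t2 (by simp) hY1a (by omega) (by omega),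
        subset_left i (i + 2) 2 t2 x3 (by push_cast; ring) hY2a (by omega) (by omega)⟩
    · -- schema 3: a=X2 b=X1 c=X3 d=Y3 e=Y2
      refine hS ⟨cyc n σ (i) x2, cyc n σ (i) x1, cyc n σ (i) x3, cyc n σ (i + 2) t3, cyc n σ (i + 2) t2, hX2, hX1, hX3, hY3, hY2,
        cyc_ne_size hX2a hX2b hX1a hX1b (by omega),
        cyc_ne_size hX2a hX2b hX3a hX3b (by omega),
        cyc_ne_chain hn4 hX2a hX2b hY3a hY3b c02,
        cyc_ne_chain hn4 hX2a hX2b hY2a hY2b c02,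
        cyc_ne_size hX1a hX1b hX3a hX3b (by omega),
        cyc_ne_chain hn4 hX1a hX1b hY3a hY3b c02,
        cyc_ne_chain hn4 hX1a hX1b hY2a hY2b c02,
        cyc_ne_chain hn4 hX3a hX3b hY3a hY3b c02,
        cyc_ne_chain hn4 hX3a hX3b hY2a hY2b c02,
        cyc_ne_size hY3a hY3b hY2a hY2b (by omega),
        subset_right i i 0 x2 x3 (by simp) hX2a (by omega) (by omega),
        subset_right i (i + 2) 2 x2 t3 (by push_cast; ring) hX2a (by omega) (by omega),
        subset_right i i 0 x1 x3 (by simp) hX1a (by omega) (by omega),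
        subset_right i (i + 2) 2 x1 t3 (by push_cast; ring) hX1a (by omega) (by omega),
        subset_right i (i + 2) 2 x1 t2 (by push_cast; ring) hX1a (by omega) (by omega),
        subset_right (i + 2) (i + 2) 0 t2 t3 (by simp) hY2a (by omega) (by omega)⟩
    · -- schema 4: a=X1 b=Y1 c=E d=Y3 e=Y2
      refine hS ⟨cyc n σ (i) x1, cyc n σ (i + 2) t1, cyc n σ (i + 1) q, cyc n σ (i + 2) t3, cyc n σ (i + 2) t2, hX1, hY1, hE, hY3, hY2,
        cyc_ne_chain hn4 hX1a hX1b hY1a hY1b c02,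
        cyc_ne_chain hn4 hX1a hX1b hEa hEb c01,
        cyc_ne_chain hn4 hX1a hX1b hY3a hY3b c02,
        cyc_ne_chain hn4 hX1a hX1b hY2a hY2b c02,
        cyc_ne_chain hn4 hY1a hY1b hEa hEb c12.symm,
        cyc_ne_size hY1a hY1b hY3a hY3b (by omega),
        cyc_ne_size hY1a hY1b hY2a hY2b (by omega),
        cyc_ne_chain hn4 hEa hEb hY3a hY3b c12,
        cyc_ne_chain hn4 hEa hEb hY2a hY2b c12,
        cyc_ne_size hY3a hY3b hY2a hY2b (by omega),
        subset_right i (i + 1) 1 x1 q (by push_cast; ring) hX1a (by omega) (by omega),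
        subset_right i (i + 2) 2 x1 t3 (by push_cast; ring) hX1a (by omega) (by omega),
        subset_left (i + 1) (i + 2) 1 t1 q (by push_cast; ring) hY1a (by omega) (by omega),
        subset_right (i + 2) (i + 2) 0 t1 t3 (by simp) hY1a (by omega) (by omega),
        subset_right (i + 2) (i + 2) 0 t1 t2 (by simp) hY1a (by omega) (by omega),
        subset_right (i + 2) (i + 2) 0 t2 t3 (by simp) hY2a (by omega) (by omega)⟩
    · -- schema 5: a=E b=Y1 c=X3 d=Y3 e=Y2
      refine hS ⟨cyc n σ (i + 1) q, cyc n σ (i + 2) t1, cyc n σ (i) x3, cyc n σ (i + 2) t3, cyc n σ (i + 2) t2, hE, hY1, hX3, hY3, hY2,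
        cyc_ne_chain hn4 hEa hEb hY1a hY1b c12,
        cyc_ne_chain hn4 hEa hEb hX3a hX3b c01.symm,
        cyc_ne_chain hn4 hEa hEb hY3a hY3b c12,
        cyc_ne_chain hn4 hEa hEb hY2a hY2b c12,
        cyc_ne_chain hn4 hY1a hY1b hX3a hX3b c02.symm,
        cyc_ne_size hY1a hY1b hY3a hY3b (by omega),
        cyc_ne_size hY1a hY1b hY2a hY2b (by omega),
        cyc_ne_chain hn4 hX3a hX3b hY3a hY3b c02,
        cyc_ne_chain hn4 hX3a hX3b hY2a hY2b c02,
        cyc_ne_size hY3a hY3b hY2a hY2b (by omega),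
        subset_left i (i + 1) 1 q x3 (by push_cast; ring) hEa (by omega) (by omega),
        subset_right (i + 1) (i + 2) 1 q t3 (by push_cast; ring) hEa (by omega) (by omega),
        subset_left i (i + 2) 2 t1 x3 (by push_cast; ring) hY1a (by omega) (by omega),
        subset_right (i + 2) (i + 2) 0 t1 t3 (by simp) hY1a (by omega) (by omega),
        subset_right (i + 2) (i + 2) 0 t1 t2 (by simp) hY1a (by omega) (by omega),
        subset_right (i + 2) (i + 2) 0 t2 t3 (by simp) hY2a (by omega) (by omega)⟩
    · -- schema 6: a=E b=X1 c=Y3 d=X3 e=X2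
      refine hS ⟨cyc n σ (i + 1) q, cyc n σ (i) x1, cyc n σ (i + 2) t3, cyc n σ (i) x3, cyc n σ (i) x2, hE, hX1, hY3, hX3, hX2,
        cyc_ne_chain hn4 hEa hEb hX1a hX1b c01.symm,
        cyc_ne_chain hn4 hEa hEb hY3a hY3b c12,
        cyc_ne_chain hn4 hEa hEb hX3a hX3b c01.symm,
        cyc_ne_chain hn4 hEa hEb hX2a hX2b c01.symm,
        cyc_ne_chain hn4 hX1a hX1b hY3a hY3b c02,
        cyc_ne_size hX1a hX1b hX3a hX3b (by omega),
        cyc_ne_size hX1a hX1b hX2a hX2b (by omega),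
        cyc_ne_chain hn4 hY3a hY3b hX3a hX3b c02.symm,
        cyc_ne_chain hn4 hY3a hY3b hX2a hX2b c02.symm,
        cyc_ne_size hX3a hX3b hX2a hX2b (by omega),
        subset_right (i + 1) (i + 2) 1 q t3 (by push_cast; ring) hEa (by omega) (by omega),
        subset_left i (i + 1) 1 q x3 (by push_cast; ring) hEa (by omega) (by omega),
        subset_right i (i + 2) 2 x1 t3 (by push_cast; ring) hX1a (by omega) (by omega),
        subset_right i i 0 x1 x3 (by simp) hX1a (by omega) (by omega),
        subset_right i i 0 x1 x2 (by simp) hX1a (by omega) (by omega),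
        subset_right i i 0 x2 x3 (by simp) hX2a (by omega) (by omega)⟩
    · -- schema 7: a=Y1 b=X1 c=E d=X3 e=X2
      refine hS ⟨cyc n σ (i + 2) t1, cyc n σ (i) x1, cyc n σ (i + 1) q, cyc n σ (i) x3, cyc n σ (i) x2, hY1, hX1, hE, hX3, hX2,
        cyc_ne_chain hn4 hY1a hY1b hX1a hX1b c02.symm,
        cyc_ne_chain hn4 hY1a hY1b hEa hEb c12.symm,
        cyc_ne_chain hn4 hY1a hY1b hX3a hX3b c02.symm,
        cyc_ne_chain hn4 hY1a hY1b hX2a hX2b c02.symm,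
        cyc_ne_chain hn4 hX1a hX1b hEa hEb c01,
        cyc_ne_size hX1a hX1b hX3a hX3b (by omega),
        cyc_ne_size hX1a hX1b hX2a hX2b (by omega),
        cyc_ne_chain hn4 hEa hEb hX3a hX3b c01.symm,
        cyc_ne_chain hn4 hEa hEb hX2a hX2b c01.symm,
        cyc_ne_size hX3a hX3b hX2a hX2b (by omega),
        subset_left (i + 1) (i + 2) 1 t1 q (by push_cast; ring) hY1a (by omega) (by omega),
        subset_left i (i + 2) 2 t1 x3 (by push_cast; ring) hY1a (by omega) (by omega),
        subset_right i (i + 1) 1 x1 q (by push_cast; ring) hX1a (by omega) (by omega),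
        subset_right i i 0 x1 x3 (by simp) hX1a (by omega) (by omega),
        subset_right i i 0 x1 x2 (by simp) hX1a (by omega) (by omega),
        subset_right i i 0 x2 x3 (by simp) hX2a (by omega) (by omega)⟩
  have g1 : (𝒜 ∩ chainC n σ (i + 2)).card ≤ 3 := by
    by_contra hgt
    push_neg at hgt
    obtain ⟨y1, y2, y3, y4, o1, o2, o3, q1, q2, q3, q4⟩ := extract_ge4 (j := i + 2) (𝒜 := 𝒜) (σ := σ) (by omega)
    obtain ⟨t1, t2, t3, o1', o2', p1, p2, p3, hprop⟩ :=
      pick_triple_L (P := fun m => 1 ≤ m ∧ m ≤ n - 1 ∧ cyc n σ (i + 2) m ∈ 𝒜) o1 o2 o3 q1 q2 q3 q4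
    exact main t1 t2 t3 o1' o2' p1 p2 p3 hprop
  have g3 : ¬ Type3L 𝒜 (chainC n σ (i + 2)) := by
    rintro ⟨h3, j0, heven, himg⟩
    obtain ⟨t1, t2, t3, o1, o2, p1, p2, p3, himg2⟩ := extract3 h3
    have hc := triple_eq_consec o1 o2 (himg2.symm.trans himg)
    rw [Nat.even_iff] at heven
    exact main t1 t2 t3 o1 o2 p1 p2 p3 (fun _ _ => by omega)
  have g4 : ¬ Type3S 𝒜 (chainC n σ (i + 2)) := by
    rintro ⟨h3, hno⟩
    obtain ⟨t1, t2, t3, o1, o2, p1, p2, p3, himg2⟩ := extract3 h3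
    refine main t1 t2 t3 o1 o2 p1 p2 p3 ?_
    intro c1 c2; exfalso
    exact hno ⟨t1, by rw [himg2, c2, c1]⟩
  exact ⟨g1, by omega, g3, g4⟩
end

section
/- Let k ≥ 2, let σ be a cyclic permutation of [n], let C_1, …, C_n be the chain decomposition of the intervals along σ, and let A be a collection of intervals along σ that contains neither Y_k nor Y_k' as a weak subposet. Then there are no three consecutive chains C_i, C_{i+1}, C_{i+2} (indices modulo n) such that C_i is of type (k+1)^R, |A ∩ C_{i+1}| = k−1, and C_{i+2} is of type (k+1)^L. -/
open Finset

/-- The family `𝒜` contains `Y_k` as a (weak) subposet: `k + 2` pairwise distinct sets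
`A 1 ⊆ A 2 ⊆ ⋯ ⊆ A k`, `A k ⊆ B`, `A k ⊆ C`, all in `𝒜`. -/
def ContainsYk {n : ℕ} (k : ℕ) (𝒜 : Finset (Finset (Fin n))) : Prop :=
  ∃ (A : Fin k → Finset (Fin n)) (B C : Finset (Fin n)),
    (∀ i, A i ∈ 𝒜) ∧ B ∈ 𝒜 ∧ C ∈ 𝒜 ∧
    Function.Injective A ∧ (∀ i, A i ≠ B) ∧ (∀ i, A i ≠ C) ∧ B ≠ C ∧
    (∀ i j : Fin k, i ≤ j → A i ⊆ A j) ∧ (∀ i, A i ⊆ B) ∧ (∀ i, A i ⊆ C)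

/-- The family `𝒜` contains `Y_k'` as a (weak) subposet: `k + 2` pairwise distinct sets
`A k ⊆ A (k-1) ⊆ ⋯ ⊆ A 1`, `B ⊆ A k`, `C ⊆ A k`, all in `𝒜`. -/
def ContainsYk' {n : ℕ} (k : ℕ) (𝒜 : Finset (Finset (Fin n))) : Prop :=
  ∃ (A : Fin k → Finset (Fin n)) (B C : Finset (Fin n)),
    (∀ i, A i ∈ 𝒜) ∧ B ∈ 𝒜 ∧ C ∈ 𝒜 ∧
    Function.Injective A ∧ (∀ i, A i ≠ B) ∧ (∀ i, A i ≠ C) ∧ B ≠ C ∧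
    (∀ i j : Fin k, i ≤ j → A j ⊆ A i) ∧ (∀ i, B ⊆ A i) ∧ (∀ i, C ⊆ A i)

/-- `B` is the largest (by cardinality) member of the family `F`. -/
def IsLargestCard {n : ℕ} (F : Finset (Finset (Fin n))) (B : Finset (Fin n)) : Prop :=
  B ∈ F ∧ ∀ X ∈ F, X.card ≤ B.card

/-- `B` is the second largest (by cardinality) member of the family `F`: exactly one
member of `F` has strictly larger cardinality. -/
def IsSecondLargestCard {n : ℕ} (F : Finset (Finset (Fin n))) (B : Finset (Fin n)) : Prop :=
  B ∈ F ∧ (F.filter fun X => B.card < X.card).card = 1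

/-- The chain `C` is of type `(k+1)^R` with respect to `𝒜`. -/
def TypeKR {n : ℕ} (k : ℕ) (𝒜 C : Finset (Finset (Fin n))) : Prop :=
  (𝒜 ∩ C).card = k + 1 ∧ ∃ B, IsSecondLargestCard (𝒜 ∩ C) B ∧ Odd B.card

/-- The chain `C` is of type `(k+1)^L` with respect to `𝒜`. -/
def TypeKL {n : ℕ} (k : ℕ) (𝒜 C : Finset (Finset (Fin n))) : Prop :=
  (𝒜 ∩ C).card = k + 1 ∧ ∃ B, IsSecondLargestCard (𝒜 ∩ C) B ∧ Even B.card


section AuxLemmas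

variable {n : ℕ} (σ : ZMod n ≃ Fin n)


variable {n : ℕ} (σ : ZMod n ≃ Fin n)

lemma aux_mem_cycInterval {x : Fin n} {a : ZMod n} {t : ℕ} :
    x ∈ cycInterval n σ a t ↔ ∃ s : ℕ, s ≤ t ∧ σ (a + (s : ZMod n)) = x := by
  unfold cycInterval
  simp [Nat.lt_succ_iff]

lemma aux_cycInterval_subset {b : ZMod n} {d t u : ℕ} (h : d + t ≤ u) :
    cycInterval n σ (b + (d : ZMod n)) t ⊆ cycInterval n σ b u := by
  intro x hx
  rw [aux_mem_cycInterval] at hx ⊢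
  obtain ⟨s, hs, hx⟩ := hx
  refine ⟨d + s, by omega, ?_⟩
  rw [← hx]
  congr 1
  push_cast
  ring

lemma aux_cycInterval_card (hn : 0 < n) (a : ZMod n) {t : ℕ} (h : t < n) :
    (cycInterval n σ a t).card = t + 1 := by
  haveI := NeZero.of_pos hn
  rw [cycInterval, Finset.card_image_of_injOn, Finset.card_range]
  intro s hs s' hs' hss
  simp only [Finset.coe_range, Set.mem_Iio] at hs hs'
  have h2 : (s : ZMod n) = (s' : ZMod n) := add_left_cancel (σ.injective hss)
  have h3 := congrArg ZMod.val h2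
  rwa [ZMod.val_cast_of_lt (by omega), ZMod.val_cast_of_lt (by omega)] at h3

lemma aux_cycInterval_start_inj (hn : 0 < n) {a b : ZMod n} {t : ℕ} (ht : t + 2 ≤ n)
    (h : cycInterval n σ a t = cycInterval n σ b t) : a = b := by
  have h0 : σ a ∈ cycInterval n σ b t := by
    rw [← h, aux_mem_cycInterval]
    exact ⟨0, Nat.zero_le _, by norm_num⟩
  rw [aux_mem_cycInterval] at h0
  obtain ⟨s₀, hs₀, he⟩ := h0
  have hba : b + (s₀ : ZMod n) = a := σ.injective he
  rcases Nat.eq_zero_or_pos s₀ with h0' | h0'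
  · subst h0'; simpa using hba.symm
  · exfalso
    have h1 : σ (b + ((s₀ - 1 : ℕ) : ZMod n)) ∈ cycInterval n σ a t := by
      rw [h, aux_mem_cycInterval]
      exact ⟨s₀ - 1, by omega, rfl⟩
    rw [aux_mem_cycInterval] at h1
    obtain ⟨s', hs', he'⟩ := h1
    have h2 : a + (s' : ZMod n) = b + ((s₀ - 1 : ℕ) : ZMod n) := σ.injective he'
    rw [← hba, add_assoc] at h2
    have h3 : ((s₀ + s' : ℕ) : ZMod n) = ((s₀ - 1 : ℕ) : ZMod n) := by
      push_cast
      exact add_left_cancel h2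
    have hmod := (ZMod.natCast_eq_natCast_iff _ _ _).mp h3
    have hdvd := (Nat.modEq_iff_dvd' (by omega)).mp hmod.symm
    have := Nat.le_of_dvd (by omega) hdvd
    omega

def aux_elt (n : ℕ) (σ : ZMod n ≃ Fin n) (j : ZMod n) (m : ℕ) : Finset (Fin n) :=
  cycInterval n σ (j - ((m / 2 : ℕ) : ZMod n)) (m - 1)

lemma aux_elt_card (hn : 0 < n) (j : ZMod n) {m : ℕ} (h1 : 1 ≤ m) (h2 : m ≤ n - 1) :
    (aux_elt n σ j m).card = m := by
  rw [aux_elt, aux_cycInterval_card σ hn _ (by omega)]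
  omega

lemma aux_elt_subset (j : ZMod n) {c₁ c₂ m m' : ℕ}
    (h₁ : c₂ + m / 2 ≤ c₁ + m' / 2)
    (h₂ : (c₁ + m' / 2) - (c₂ + m / 2) + (m - 1) ≤ m' - 1) :
    aux_elt n σ (j + (c₁ : ZMod n)) m ⊆ aux_elt n σ (j + (c₂ : ZMod n)) m' := by
  set d := (c₁ + m' / 2) - (c₂ + m / 2) with hd
  have hnat : c₂ + m / 2 + d = c₁ + m' / 2 := by omega
  have hcast : ((c₂ + m / 2 + d : ℕ) : ZMod n) = ((c₁ + m' / 2 : ℕ) : ZMod n) := by rw [hnat]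
  push_cast at hcast
  have key : (j + (c₁ : ZMod n)) - ((m / 2 : ℕ) : ZMod n)
      = ((j + (c₂ : ZMod n)) - ((m' / 2 : ℕ) : ZMod n)) + (d : ZMod n) := by
    linear_combination -hcast
  rw [aux_elt, aux_elt, key]
  exact aux_cycInterval_subset σ (by omega)

lemma aux_elt_ne (hn : 0 < n) (j : ZMod n) {c₁ c₂ m : ℕ} (h1 : 1 ≤ m) (h2 : m ≤ n - 1)
    (hc : c₁ < c₂) (hcn : c₂ - c₁ < n) :
    aux_elt n σ (j + (c₁ : ZMod n)) m ≠ aux_elt n σ (j + (c₂ : ZMod n)) m := by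
  intro h
  have hst := aux_cycInterval_start_inj σ hn (t := m - 1) (by omega) h
  have h4 : ((c₁ : ℕ) : ZMod n) = ((c₂ : ℕ) : ZMod n) := by linear_combination hst
  have hmod := (ZMod.natCast_eq_natCast_iff _ _ _).mp h4
  have hdvd := (Nat.modEq_iff_dvd' hc.le).mp hmod
  have := Nat.le_of_dvd (by omega) hdvd
  omega

lemma aux_chain_rep (hn : 0 < n) (j : ZMod n) {X : Finset (Fin n)} (hX : X ∈ chainC n σ j) :
    ∃ m, 1 ≤ m ∧ m ≤ n - 1 ∧ X.card = m ∧ X = aux_elt n σ j m := by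
  rw [chainC, Finset.mem_image] at hX
  obtain ⟨m, hm, hXm⟩ := hX
  rw [Finset.mem_Icc] at hm
  have hXe : X = aux_elt n σ j m := hXm.symm
  exact ⟨m, hm.1, hm.2, by rw [hXe]; exact aux_elt_card σ hn j hm.1 hm.2, hXe⟩

lemma aux_chainC_card_le (j : ZMod n) : (chainC n σ j).card ≤ n - 1 := by
  refine (Finset.card_image_le).trans ?_
  rw [Nat.card_Icc]
  omega

noncomputable def aux_pick {n : ℕ} (G : Finset (Finset (Fin n))) (m : ℕ) : Finset (Fin n) :=
  if h : ∃ X, X ∈ G ∧ X.card = m then h.choose else ∅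

lemma aux_pick_spec {G : Finset (Finset (Fin n))} {m : ℕ} (h : m ∈ G.image Finset.card) :
    aux_pick G m ∈ G ∧ (aux_pick G m).card = m := by
  rw [Finset.mem_image] at h
  obtain ⟨X, hX, hXm⟩ := h
  have h' : ∃ X, X ∈ G ∧ X.card = m := ⟨X, hX, hXm⟩
  rw [aux_pick, dif_pos h']
  exact h'.choose_spec

lemma aux_filter_ne_card {G : Finset (Finset (Fin n))}
    (hinj : ∀ X ∈ G, ∀ Y ∈ G, X.card = Y.card → X = Y) {m : ℕ}
    (hm : m ∈ G.image Finset.card) :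
    (G.filter (fun X => X.card ≠ m)).card = G.card - 1 := by
  classical
  obtain ⟨X₀, hX₀, hX₀m⟩ := Finset.mem_image.mp hm
  have heq : G.filter (fun X => X.card = m) = {X₀} := by
    ext Y
    simp only [Finset.mem_filter, Finset.mem_singleton]
    constructor
    · rintro ⟨hY, hYm⟩
      exact hinj Y hY X₀ hX₀ (by omega)
    · rintro rfl
      exact ⟨hX₀, hX₀m⟩
  have h2 := Finset.card_filter_add_card_filter_not (s := G) (p := fun X => X.card = m)
  rw [heq] at h2
  simp only [Finset.card_singleton] at h2
  have h3 : (G.filter (fun X => ¬ X.card = m)).card = G.card - 1 := by omega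
  convert h3 using 2


variable {k : ℕ}

variable {n k : ℕ}

lemma aux_second_split {F : Finset (Finset (Fin n))} {S : Finset (Fin n)}
    (hinj : ∀ X ∈ F, ∀ Y ∈ F, X.card = Y.card → X = Y)
    (hFcard : F.card = k + 1) (hS : IsSecondLargestCard F S) :
    S ∈ F ∧ ∃ T ∈ F, S.card < T.card ∧
      (F.filter (fun X => X.card < S.card)).card = k - 1 ∧
      (∀ X ∈ F, X.card < S.card ∨ X = S ∨ X = T) := by
  classical
  obtain ⟨hSF, hfilt⟩ := hS
  obtain ⟨T, hT⟩ := Finset.card_eq_one.mp hfilt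
  have hTmem : T ∈ F.filter (fun X => S.card < X.card) := by
    rw [hT]; exact Finset.mem_singleton_self T
  rw [Finset.mem_filter] at hTmem
  have huniq : ∀ X ∈ F, S.card < X.card → X = T := by
    intro X hX h
    have hXm : X ∈ F.filter (fun Y => S.card < Y.card) := Finset.mem_filter.mpr ⟨hX, h⟩
    rw [hT] at hXm
    simpa using hXm
  have htri : ∀ X ∈ F, X.card < S.card ∨ X = S ∨ X = T := by
    intro X hX
    rcases lt_trichotomy X.card S.card with h | h | h
    · exact Or.inl h
    · exact Or.inr (Or.inl (hinj X hX S hSF h))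
    · exact Or.inr (Or.inr (huniq X hX h))
  refine ⟨hSF, T, hTmem.1, hTmem.2, ?_, htri⟩
  have hST : S ≠ T := by
    intro h
    have := hTmem.2
    rw [← h] at this
    omega
  have hflt : F.filter (fun X => X.card < S.card) = F \ {S, T} := by
    ext X
    simp only [Finset.mem_filter, Finset.mem_sdiff, Finset.mem_insert, Finset.mem_singleton]
    constructor
    · rintro ⟨hX, h⟩
      refine ⟨hX, ?_⟩
      push_neg
      constructor
      · rintro rfl; omega
      · rintro rfl; have := hTmem.2; omega
    · rintro ⟨hX, h⟩
      push_neg at h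
      refine ⟨hX, ?_⟩
      rcases htri X hX with h' | h' | h'
      · exact h'
      · exact absurd h' h.1
      · exact absurd h' h.2
  rw [hflt, Finset.card_sdiff_of_subset]
  · rw [Finset.card_insert_of_notMem (by simpa using hST), Finset.card_singleton, hFcard]
    omega
  · intro Y hY
    simp only [Finset.mem_insert, Finset.mem_singleton] at hY
    rcases hY with rfl | rfl
    · exact hSF
    · exact hTmem.1

lemma aux_buildYk (hk : 2 ≤ k) {𝒜 G : Finset (Finset (Fin n))}
    {S B C : Finset (Fin n)}
    (hGcard : G.card = k - 1)
    (hG : ∀ X ∈ G, X ∈ 𝒜) (hS : S ∈ 𝒜) (hB : B ∈ 𝒜) (hC : C ∈ 𝒜)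
    (hchain : ∀ X ∈ G, ∀ Y ∈ G, X.card ≤ Y.card → X ⊆ Y)
    (hGS : ∀ X ∈ G, X ⊆ S) (hGcardS : ∀ X ∈ G, X.card < S.card)
    (hSB : S ⊆ B) (hSC : S ⊆ C)
    (hSBcard : S.card < B.card) (hSCcard : S.card < C.card) (hBC : B ≠ C) :
    ContainsYk k 𝒜 := by
  classical
  have hinj : ∀ X ∈ G, ∀ Y ∈ G, X.card = Y.card → X = Y := fun X hX Y hY h =>
    Finset.Subset.antisymm (hchain X hX Y hY h.le) (hchain Y hY X hX h.ge)
  have hNcard : (G.image Finset.card).card = k - 1 := by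
    rw [Finset.card_image_of_injOn (fun X hX Y hY h => hinj X hX Y hY h), hGcard]
  set e := (G.image Finset.card).orderIsoOfFin hNcard with he
  set A : Fin k → Finset (Fin n) :=
    (fun j => if h : (j : ℕ) < k - 1 then aux_pick G (e ⟨(j : ℕ), h⟩) else S) with hA
  have hmemA : ∀ (j : Fin k) (h : (j : ℕ) < k - 1),
      A j ∈ G ∧ (A j).card = (e ⟨(j : ℕ), h⟩ : ℕ) := by
    intro j h
    simp only [hA, dif_pos h]
    exact aux_pick_spec (e ⟨(j : ℕ), h⟩).2
  have hAeqS : ∀ (j : Fin k), ¬ ((j : ℕ) < k - 1) → A j = S := by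
    intro j h
    simp only [hA, dif_neg h]
  have hcardlt : ∀ (j : Fin k) (h : (j : ℕ) < k - 1), (A j).card < S.card := by
    intro j h
    exact hGcardS _ (hmemA j h).1
  have hemono : ∀ (p q : Fin (k - 1)), p < q → ((e p : ℕ) < (e q : ℕ)) :=
    fun p q h => Subtype.coe_lt_coe.mpr (e.strictMono h)
  have hstrict : ∀ (p q : Fin k), p < q → (A p).card < (A q).card := by
    intro p q hpq
    have hpq' : (p : ℕ) < (q : ℕ) := hpq
    by_cases hq : (q : ℕ) < k - 1
    · have hp : (p : ℕ) < k - 1 := by omega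
      rw [(hmemA p hp).2, (hmemA q hq).2]
      exact hemono _ _ (by simp only [Fin.mk_lt_mk]; omega)
    · have hp : (p : ℕ) < k - 1 := by have := q.isLt; omega
      rw [hAeqS q hq]
      exact hcardlt p hp
  have hcardS : ∀ j : Fin k, (A j).card ≤ S.card := by
    intro j
    by_cases h : (j : ℕ) < k - 1
    · exact (hcardlt j h).le
    · rw [hAeqS j h]
  have hsub : ∀ (p q : Fin k), p ≤ q → A p ⊆ A q := by
    intro p q hpq
    rcases eq_or_lt_of_le hpq with rfl | hpq'
    · exact subset_rfl
    have hpq'' : (p : ℕ) < (q : ℕ) := hpq'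
    by_cases hq : (q : ℕ) < k - 1
    · have hp : (p : ℕ) < k - 1 := by omega
      exact hchain _ (hmemA p hp).1 _ (hmemA q hq).1 (hstrict p q hpq').le
    · have hp : (p : ℕ) < k - 1 := by have := q.isLt; omega
      rw [hAeqS q hq]
      exact hGS _ (hmemA p hp).1
  have hsubS : ∀ j : Fin k, A j ⊆ S := by
    intro j
    by_cases h : (j : ℕ) < k - 1
    · exact hGS _ (hmemA j h).1
    · rw [hAeqS j h]
  refine ⟨A, B, C, ?_, hB, hC, ?_, ?_, ?_, hBC, hsub, ?_, ?_⟩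
  · intro j
    by_cases h : (j : ℕ) < k - 1
    · exact hG _ (hmemA j h).1
    · rw [hAeqS j h]; exact hS
  · intro p q h
    rcases lt_trichotomy p q with h' | h' | h'
    · have := hstrict p q h'; rw [h] at this; omega
    · exact h'
    · have := hstrict q p h'; rw [h] at this; omega
  · intro j h
    have h1 := hcardS j
    rw [h] at h1
    omega
  · intro j h
    have h1 := hcardS j
    rw [h] at h1
    omega
  · exact fun j => (hsubS j).trans hSB
  · exact fun j => (hsubS j).trans hSC

lemma aux_buildYk' (hk : 2 ≤ k) {𝒜 G : Finset (Finset (Fin n))}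
    {S T B C : Finset (Fin n)}
    (hGcard : G.card = k - 2)
    (hG : ∀ X ∈ G, X ∈ 𝒜) (hS : S ∈ 𝒜) (hT : T ∈ 𝒜) (hB : B ∈ 𝒜) (hC : C ∈ 𝒜)
    (hchain : ∀ X ∈ G, ∀ Y ∈ G, X.card ≤ Y.card → X ⊆ Y)
    (hGS : ∀ X ∈ G, X ⊆ S) (hGcardS : ∀ X ∈ G, X.card < S.card)
    (hST : S ⊆ T) (hSTcard : S.card < T.card)
    (hBG : ∀ X ∈ G, B ⊆ X) (hCG : ∀ X ∈ G, C ⊆ X)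
    (hBS : B ⊆ S) (hCS : C ⊆ S)
    (hBcard : ∀ X ∈ G, B.card < X.card) (hCcard : ∀ X ∈ G, C.card < X.card)
    (hBScard : B.card < S.card) (hCScard : C.card < S.card) (hBC : B ≠ C) :
    ContainsYk' k 𝒜 := by
  classical
  have hinj : ∀ X ∈ G, ∀ Y ∈ G, X.card = Y.card → X = Y := fun X hX Y hY h =>
    Finset.Subset.antisymm (hchain X hX Y hY h.le) (hchain Y hY X hX h.ge)
  have hNcard : (G.image Finset.card).card = k - 2 := by
    rw [Finset.card_image_of_injOn (fun X hX Y hY h => hinj X hX Y hY h), hGcard]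
  set e := (G.image Finset.card).orderIsoOfFin hNcard with he
  set A : Fin k → Finset (Fin n) :=
    (fun j => if h2 : 2 ≤ (j : ℕ) then
        aux_pick G (e ⟨k - 1 - (j : ℕ), by have := j.isLt; omega⟩)
      else if (j : ℕ) = 0 then T else S) with hA
  have hmemA : ∀ (j : Fin k) (h : 2 ≤ (j : ℕ)),
      A j ∈ G ∧ (A j).card = (e ⟨k - 1 - (j : ℕ), by have := j.isLt; omega⟩ : ℕ) := by
    intro j h
    simp only [hA, dif_pos h]
    exact aux_pick_spec (e _).2
  have hA0 : ∀ (j : Fin k), (j : ℕ) = 0 → A j = T := by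
    intro j h
    simp only [hA, dif_neg (by omega : ¬ 2 ≤ (j : ℕ)), if_pos h]
  have hA1 : ∀ (j : Fin k), (j : ℕ) = 1 → A j = S := by
    intro j h
    simp only [hA, dif_neg (by omega : ¬ 2 ≤ (j : ℕ)), if_neg (by omega : ¬ (j : ℕ) = 0)]
  have hemono : ∀ (p q : Fin (k - 2)), p < q → ((e p : ℕ) < (e q : ℕ)) :=
    fun p q h => Subtype.coe_lt_coe.mpr (e.strictMono h)
  -- strict descending cards
  have hstrict : ∀ (p q : Fin k), p < q → (A q).card < (A p).card := by
    intro p q hpq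
    have hpq' : (p : ℕ) < (q : ℕ) := hpq
    by_cases hp2 : 2 ≤ (p : ℕ)
    · have hq2 : 2 ≤ (q : ℕ) := by omega
      rw [(hmemA p hp2).2, (hmemA q hq2).2]
      exact hemono _ _ (by simp only [Fin.mk_lt_mk]; have := q.isLt; omega)
    · by_cases hp0 : (p : ℕ) = 0
      · rw [hA0 p hp0]
        by_cases hq2 : 2 ≤ (q : ℕ)
        · exact lt_trans (hGcardS _ (hmemA q hq2).1) hSTcard
        · rw [hA1 q (by omega)]
          exact hSTcard
      · -- p = 1
        have hp1 : (p : ℕ) = 1 := by omega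
        rw [hA1 p hp1]
        have hq2 : 2 ≤ (q : ℕ) := by omega
        exact hGcardS _ (hmemA q hq2).1
  have hsub : ∀ (p q : Fin k), p ≤ q → A q ⊆ A p := by
    intro p q hpq
    rcases eq_or_lt_of_le hpq with rfl | hpq'
    · exact subset_rfl
    have hpq'' : (p : ℕ) < (q : ℕ) := hpq'
    by_cases hp2 : 2 ≤ (p : ℕ)
    · have hq2 : 2 ≤ (q : ℕ) := by omega
      exact hchain _ (hmemA q hq2).1 _ (hmemA p hp2).1 (hstrict p q hpq').le
    · by_cases hp0 : (p : ℕ) = 0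
      · rw [hA0 p hp0]
        by_cases hq2 : 2 ≤ (q : ℕ)
        · exact (hGS _ (hmemA q hq2).1).trans hST
        · rw [hA1 q (by omega)]
          exact hST
      · have hp1 : (p : ℕ) = 1 := by omega
        rw [hA1 p hp1]
        have hq2 : 2 ≤ (q : ℕ) := by omega
        exact hGS _ (hmemA q hq2).1
  have hBsub : ∀ j : Fin k, B ⊆ A j := by
    intro j
    by_cases h2 : 2 ≤ (j : ℕ)
    · exact hBG _ (hmemA j h2).1
    · by_cases h0 : (j : ℕ) = 0
      · rw [hA0 j h0]; exact hBS.trans hST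
      · rw [hA1 j (by omega)]; exact hBS
  have hCsub : ∀ j : Fin k, C ⊆ A j := by
    intro j
    by_cases h2 : 2 ≤ (j : ℕ)
    · exact hCG _ (hmemA j h2).1
    · by_cases h0 : (j : ℕ) = 0
      · rw [hA0 j h0]; exact hCS.trans hST
      · rw [hA1 j (by omega)]; exact hCS
  have hBlt : ∀ j : Fin k, B.card < (A j).card := by
    intro j
    by_cases h2 : 2 ≤ (j : ℕ)
    · exact hBcard _ (hmemA j h2).1
    · by_cases h0 : (j : ℕ) = 0
      · rw [hA0 j h0]; exact lt_trans hBScard hSTcard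
      · rw [hA1 j (by omega)]; exact hBScard
  have hClt : ∀ j : Fin k, C.card < (A j).card := by
    intro j
    by_cases h2 : 2 ≤ (j : ℕ)
    · exact hCcard _ (hmemA j h2).1
    · by_cases h0 : (j : ℕ) = 0
      · rw [hA0 j h0]; exact lt_trans hCScard hSTcard
      · rw [hA1 j (by omega)]; exact hCScard
  refine ⟨A, B, C, ?_, hB, hC, ?_, ?_, ?_, hBC, hsub, hBsub, hCsub⟩
  · intro j
    by_cases h2 : 2 ≤ (j : ℕ)
    · exact hG _ (hmemA j h2).1
    · by_cases h0 : (j : ℕ) = 0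
      · rw [hA0 j h0]; exact hT
      · rw [hA1 j (by omega)]; exact hS
  · intro p q h
    rcases lt_trichotomy p q with h' | h' | h'
    · have := hstrict p q h'; rw [h] at this; omega
    · exact h'
    · have := hstrict q p h'; rw [h] at this; omega
  · intro j h
    have h1 := hBlt j
    rw [h] at h1
    omega
  · intro j h
    have h1 := hClt j
    rw [h] at h1
    omega


lemma aux_two_smallest {H : Finset (Finset (Fin n))} {c : ℕ}
    (hinj : ∀ X ∈ H, ∀ Y ∈ H, X.card = Y.card → X = Y)
    (hcard : H.card = c) (hc : 2 ≤ c) :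
    ∃ a₁ a₂ : ℕ, a₁ ∈ H.image Finset.card ∧ a₁ < a₂ ∧
      (∀ X ∈ H, X.card ≠ a₁ → a₂ ≤ X.card) := by
  classical
  have hNcard : (H.image Finset.card).card = c := by
    rw [Finset.card_image_of_injOn
      (fun X hX Y hY h => hinj X hX Y hY h), hcard]
  have hne : (H.image Finset.card).Nonempty := by
    rw [← Finset.card_pos, hNcard]; omega
  set N := H.image Finset.card with hN
  set a₁ := N.min' hne with ha₁
  have hene : (N.erase a₁).Nonempty := by
    rw [← Finset.card_pos, Finset.card_erase_of_mem (N.min'_mem hne), hNcard]; omega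
  set a₂ := (N.erase a₁).min' hene with ha₂
  have ha₂mem := (N.erase a₁).min'_mem hene
  rw [Finset.mem_erase] at ha₂mem
  refine ⟨a₁, a₂, N.min'_mem hne, ?_, ?_⟩
  · exact lt_of_le_of_ne (N.min'_le _ ha₂mem.2) (Ne.symm ha₂mem.1)
  · intro X hX hne'
    exact Finset.min'_le _ _ (Finset.mem_erase.mpr ⟨hne', Finset.mem_image_of_mem _ hX⟩)

end AuxLemmas

set_option maxHeartbeats 1000000 in
/-- There are no three consecutive chains `C i`, `C (i+1)`, `C (i+2)` such that `C i` is of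
type `(k+1)^R`, `|𝒜 ∩ C (i+1)| = k - 1`, and `C (i+2)` is of type `(k+1)^L`. -/
theorem Yk_no_RL_pattern (n k : ℕ) (hk : 2 ≤ k) (σ : ZMod n ≃ Fin n)
    (𝒜 : Finset (Finset (Fin n))) (hInt : ∀ I ∈ 𝒜, IsCycInterval n σ I)
    (hY : ¬ ContainsYk k 𝒜) (hY' : ¬ ContainsYk' k 𝒜) (i : ZMod n) :
    ¬ (TypeKR k 𝒜 (chainC n σ i) ∧ (𝒜 ∩ chainC n σ (i + 1)).card = k - 1 ∧
        TypeKL k 𝒜 (chainC n σ (i + 2))) := by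
  classical
  rcases Nat.eq_zero_or_pos n with hn | hn0
  · subst hn; exact fun _ => (σ 0).elim0
  rintro ⟨⟨hF0card, S, hS2, hSodd⟩, hF1card, hF2card, S', hS'2, hS'even⟩
  set F₀ := 𝒜 ∩ chainC n σ i with hF₀def
  set F₁ := 𝒜 ∩ chainC n σ (i + 1) with hF₁def
  set F₂ := 𝒜 ∩ chainC n σ (i + 2) with hF₂def
  have h0eq : i = i + ((0 : ℕ) : ZMod n) := by push_cast; ring
  have h1eq : i + 1 = i + ((1 : ℕ) : ZMod n) := by push_cast; ring
  have h2eq : i + 2 = i + ((2 : ℕ) : ZMod n) := by push_cast; ring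
  have hrep₀ : ∀ X ∈ F₀, ∃ m, 1 ≤ m ∧ m ≤ n - 1 ∧ X.card = m ∧
      X = aux_elt n σ (i + ((0 : ℕ) : ZMod n)) m := by
    intro X hX
    rw [← h0eq]
    exact aux_chain_rep σ hn0 _ (Finset.mem_inter.mp hX).2
  have hrep₁ : ∀ X ∈ F₁, ∃ m, 1 ≤ m ∧ m ≤ n - 1 ∧ X.card = m ∧
      X = aux_elt n σ (i + ((1 : ℕ) : ZMod n)) m := by
    intro X hX
    rw [← h1eq]
    exact aux_chain_rep σ hn0 _ (Finset.mem_inter.mp hX).2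
  have hrep₂ : ∀ X ∈ F₂, ∃ m, 1 ≤ m ∧ m ≤ n - 1 ∧ X.card = m ∧
      X = aux_elt n σ (i + ((2 : ℕ) : ZMod n)) m := by
    intro X hX
    rw [← h2eq]
    exact aux_chain_rep σ hn0 _ (Finset.mem_inter.mp hX).2
  have hinj₀ : ∀ X ∈ F₀, ∀ Y ∈ F₀, X.card = Y.card → X = Y := by
    intro X hX Y hY h
    obtain ⟨m, _, _, hcm, hXe⟩ := hrep₀ X hX
    obtain ⟨m', _, _, hcm', hYe⟩ := hrep₀ Y hY
    have : m = m' := by omega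
    rw [hXe, hYe, this]
  have hinj₁ : ∀ X ∈ F₁, ∀ Y ∈ F₁, X.card = Y.card → X = Y := by
    intro X hX Y hY h
    obtain ⟨m, _, _, hcm, hXe⟩ := hrep₁ X hX
    obtain ⟨m', _, _, hcm', hYe⟩ := hrep₁ Y hY
    have : m = m' := by omega
    rw [hXe, hYe, this]
  have hinj₂ : ∀ X ∈ F₂, ∀ Y ∈ F₂, X.card = Y.card → X = Y := by
    intro X hX Y hY h
    obtain ⟨m, _, _, hcm, hXe⟩ := hrep₂ X hX
    obtain ⟨m', _, _, hcm', hYe⟩ := hrep₂ Y hY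
    have : m = m' := by omega
    rw [hXe, hYe, this]
  have hchain₀ : ∀ X ∈ F₀, ∀ Y ∈ F₀, X.card ≤ Y.card → X ⊆ Y := by
    intro X hX Y hY h
    obtain ⟨m, hm1, hm2, hcm, hXe⟩ := hrep₀ X hX
    obtain ⟨m', hm1', hm2', hcm', hYe⟩ := hrep₀ Y hY
    rw [hXe, hYe]
    exact aux_elt_subset σ i (c₁ := 0) (c₂ := 0) (by omega) (by omega)
  have hchain₁ : ∀ X ∈ F₁, ∀ Y ∈ F₁, X.card ≤ Y.card → X ⊆ Y := by
    intro X hX Y hY h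
    obtain ⟨m, hm1, hm2, hcm, hXe⟩ := hrep₁ X hX
    obtain ⟨m', hm1', hm2', hcm', hYe⟩ := hrep₁ Y hY
    rw [hXe, hYe]
    exact aux_elt_subset σ i (c₁ := 1) (c₂ := 1) (by omega) (by omega)
  have hchain₂ : ∀ X ∈ F₂, ∀ Y ∈ F₂, X.card ≤ Y.card → X ⊆ Y := by
    intro X hX Y hY h
    obtain ⟨m, hm1, hm2, hcm, hXe⟩ := hrep₂ X hX
    obtain ⟨m', hm1', hm2', hcm', hYe⟩ := hrep₂ Y hY
    rw [hXe, hYe]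
    exact aux_elt_subset σ i (c₁ := 2) (c₂ := 2) (by omega) (by omega)
  have hnk : k + 2 ≤ n := by
    have h1 : F₀.card ≤ (chainC n σ i).card :=
      Finset.card_le_card Finset.inter_subset_right
    have h2 := aux_chainC_card_le σ i
    omega
  have hneXY : ∀ {c₁ c₂ : ℕ} {X Y : Finset (Fin n)}, c₁ < c₂ → c₂ < n →
      X ∈ 𝒜 ∩ chainC n σ (i + (c₁ : ZMod n)) → Y ∈ 𝒜 ∩ chainC n σ (i + (c₂ : ZMod n)) →
      X ≠ Y := by
    intro c₁ c₂ X Y hc hcn hX hY''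
    obtain ⟨m, hm1, hm2, hcm, hXe⟩ := aux_chain_rep σ hn0 _ (Finset.mem_inter.mp hX).2
    obtain ⟨m', hm1', hm2', hcm', hYe⟩ := aux_chain_rep σ hn0 _ (Finset.mem_inter.mp hY'').2
    by_cases hmm : m = m'
    · subst hmm
      rw [hXe, hYe]
      exact aux_elt_ne σ hn0 i hm1 hm2 hc (by omega)
    · intro h
      rw [h] at hcm
      omega
  -- second largest structure
  obtain ⟨hS₀, T, hT₀, hSTcard, hG₀card, htri₀⟩ := aux_second_split hinj₀ hF0card hS2
  obtain ⟨hS'₂, T', hT'₂, hS'T'card, hG₂card, htri₂⟩ := aux_second_split hinj₂ hF2card hS'2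
  set G₀ := F₀.filter (fun X => X.card < S.card) with hG₀def
  set G₂ := F₂.filter (fun X => X.card < S'.card) with hG₂def
  have hG₀sub : ∀ X ∈ G₀, X ∈ F₀ := fun X hX => (Finset.mem_filter.mp hX).1
  have hG₀lt : ∀ X ∈ G₀, X.card < S.card := fun X hX => (Finset.mem_filter.mp hX).2
  have hG₂sub : ∀ X ∈ G₂, X ∈ F₂ := fun X hX => (Finset.mem_filter.mp hX).1
  have hG₂lt : ∀ X ∈ G₂, X.card < S'.card := fun X hX => (Finset.mem_filter.mp hX).2
  have hG₀S : ∀ X ∈ G₀, X ⊆ S := fun X hX => hchain₀ X (hG₀sub X hX) S hS₀ (hG₀lt X hX).le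
  have hG₂S' : ∀ X ∈ G₂, X ⊆ S' := fun X hX => hchain₂ X (hG₂sub X hX) S' hS'₂ (hG₂lt X hX).le
  have hG₀chain : ∀ X ∈ G₀, ∀ Y ∈ G₀, X.card ≤ Y.card → X ⊆ Y :=
    fun X hX Y hY h => hchain₀ X (hG₀sub X hX) Y (hG₀sub Y hY) h
  have hG₂chain : ∀ X ∈ G₂, ∀ Y ∈ G₂, X.card ≤ Y.card → X ⊆ Y :=
    fun X hX Y hY h => hchain₂ X (hG₂sub X hX) Y (hG₂sub Y hY) h
  have hST : S ⊆ T := hchain₀ S hS₀ T hT₀ hSTcard.le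
  have hS'T' : S' ⊆ T' := hchain₂ S' hS'₂ T' hT'₂ hS'T'card.le
  have hS𝒜 : S ∈ 𝒜 := (Finset.mem_inter.mp hS₀).1
  have hT𝒜 : T ∈ 𝒜 := (Finset.mem_inter.mp hT₀).1
  have hS'𝒜 : S' ∈ 𝒜 := (Finset.mem_inter.mp hS'₂).1
  have hT'𝒜 : T' ∈ 𝒜 := (Finset.mem_inter.mp hT'₂).1
  have hG₀𝒜 : ∀ X ∈ G₀, X ∈ 𝒜 := fun X hX => (Finset.mem_inter.mp (hG₀sub X hX)).1
  have hG₂𝒜 : ∀ X ∈ G₂, X ∈ 𝒜 := fun X hX => (Finset.mem_inter.mp (hG₂sub X hX)).1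
  -- sizes
  obtain ⟨t, ht⟩ := hSodd
  obtain ⟨s, hs⟩ := hS'even
  obtain ⟨pS, hpS1, hpS2, hpSc, hSe⟩ := hrep₀ S hS₀
  obtain ⟨pS', hpS'1, hpS'2, hpS'c, hS'e⟩ := hrep₂ S' hS'₂
  have hs1 : 1 ≤ s := by omega
  have ht1 : 1 ≤ t := by
    obtain ⟨X, hX⟩ := Finset.card_pos.mp (show 0 < G₀.card by omega)
    obtain ⟨m, hm1, _, hcm, _⟩ := hrep₀ X (hG₀sub X hX)
    have := hG₀lt X hX
    omega
  -- Claim A: no member of F₁ has size ≥ 2t+2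
  have claimA : ∀ D ∈ F₁, D.card ≤ 2 * t + 1 := by
    intro D hD
    by_contra hcon
    push_neg at hcon
    obtain ⟨m, hm1, hm2, hcm, hDe⟩ := hrep₁ D hD
    apply hY
    refine aux_buildYk hk hG₀card hG₀𝒜 hS𝒜 hT𝒜 (Finset.mem_inter.mp hD).1
      hG₀chain hG₀S hG₀lt hST ?_ hSTcard (by omega) ?_
    · rw [hSe, hDe]
      exact aux_elt_subset σ i (c₁ := 0) (c₂ := 1) (by omega) (by omega)
    · refine hneXY (c₁ := 0) (c₂ := 1) (by omega) (by omega) ?_ ?_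
      · rw [← h0eq]; exact hT₀
      · rw [← h1eq]; exact hD
  -- Claim B: no member of F₁ has size ≥ 2s+1
  have claimB : ∀ D ∈ F₁, D.card ≤ s + s := by
    intro D hD
    by_contra hcon
    push_neg at hcon
    obtain ⟨m, hm1, hm2, hcm, hDe⟩ := hrep₁ D hD
    apply hY
    refine aux_buildYk hk hG₂card hG₂𝒜 hS'𝒜 hT'𝒜 (Finset.mem_inter.mp hD).1
      hG₂chain hG₂S' hG₂lt hS'T' ?_ hS'T'card (by omega) ?_
    · rw [hS'e, hDe]
      exact aux_elt_subset σ i (c₁ := 2) (c₂ := 1) (by omega) (by omega)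
    · refine Ne.symm (hneXY (c₁ := 1) (c₂ := 2) (by omega) (by omega) ?_ ?_)
      · rw [← h1eq]; exact hD
      · rw [← h2eq]; exact hT'₂
  -- main case analysis on s vs t
  have hcases : s < t ∨ s = t ∨ s = t + 1 ∨ t + 2 ≤ s := by omega
  rcases hcases with hst | hst | hst | hst
  · -- s < t : S' ⊂ S, Y_k from chain i+2 with tops T' and S
    apply hY
    refine aux_buildYk hk hG₂card hG₂𝒜 hS'𝒜 hT'𝒜 hS𝒜
      hG₂chain hG₂S' hG₂lt hS'T' ?_ hS'T'card (by omega) ?_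
    · rw [hS'e, hSe]
      exact aux_elt_subset σ i (c₁ := 2) (c₂ := 0) (by omega) (by omega)
    · refine Ne.symm (hneXY (c₁ := 0) (c₂ := 2) (by omega) (by omega) ?_ ?_)
      · rw [← h0eq]; exact hS₀
      · rw [← h2eq]; exact hT'₂
  · -- s = t : everything in F₁ lies below S
    have hDsubS : ∀ D ∈ F₁, D ⊆ S := by
      intro D hD
      obtain ⟨m, hm1, hm2, hcm, hDe⟩ := hrep₁ D hD
      have hb := claimB D hD
      rw [hDe, hSe]
      exact aux_elt_subset σ i (c₁ := 1) (c₂ := 0) (by omega) (by omega)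
    have hDlt : ∀ D ∈ F₁, D.card < S.card := by
      intro D hD
      have := claimB D hD
      omega
    rcases Nat.lt_or_ge k 3 with hk3 | hk3
    · -- k = 2
      obtain ⟨A₁, hA₁⟩ := Finset.card_pos.mp (show 0 < G₀.card by omega)
      obtain ⟨D₁, hD₁⟩ := Finset.card_pos.mp (show 0 < F₁.card by omega)
      apply hY'
      refine aux_buildYk' (G := (∅ : Finset (Finset (Fin n)))) hk (by simp; omega)
        (by simp) hS𝒜 hT𝒜 (hG₀𝒜 A₁ hA₁) ((Finset.mem_inter.mp hD₁).1)
        (by simp) (by simp) (by simp) hST hSTcard (by simp) (by simp)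
        (hG₀S A₁ hA₁) (hDsubS D₁ hD₁) (by simp) (by simp)
        (hG₀lt A₁ hA₁) (hDlt D₁ hD₁) ?_
      refine hneXY (c₁ := 0) (c₂ := 1) (by omega) (by omega) ?_ ?_
      · rw [← h0eq]; exact hG₀sub A₁ hA₁
      · rw [← h1eq]; exact hD₁
    · -- k ≥ 3
      obtain ⟨a₁, a₂, ha₁mem, ha12, hmin₀⟩ := aux_two_smallest
        (fun X hX Y hY h => hinj₀ X (hG₀sub X hX) Y (hG₀sub Y hY) h) hG₀card (by omega)
      obtain ⟨d₁, d₂, hd₁mem, hd12, hmin₁⟩ := aux_two_smallest hinj₁ hF1card (by omega)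
      set A₁ := aux_pick G₀ a₁ with hA₁def
      set D₁ := aux_pick F₁ d₁ with hD₁def
      have hA₁G : A₁ ∈ G₀ := (aux_pick_spec ha₁mem).1
      have hA₁c : A₁.card = a₁ := (aux_pick_spec ha₁mem).2
      have hD₁F : D₁ ∈ F₁ := (aux_pick_spec hd₁mem).1
      have hD₁c : D₁.card = d₁ := (aux_pick_spec hd₁mem).2
      have hA₁𝒜 : A₁ ∈ 𝒜 := hG₀𝒜 A₁ hA₁G
      have hD₁𝒜 : D₁ ∈ 𝒜 := (Finset.mem_inter.mp hD₁F).1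
      have hdich : (a₁ + 1 ≤ d₂ ∧ (a₁ % 2 = 1 ∨ a₁ + 2 ≤ d₂)) ∨
          (d₁ + 1 ≤ a₂ ∧ (d₁ % 2 = 0 ∨ d₁ + 2 ≤ a₂)) := by omega
      rcases hdich with ⟨hc1, hc2⟩ | ⟨hc1, hc2⟩
      · -- A₁ fits below the second-smallest member of F₁
        set G' := F₁.filter (fun X => X.card ≠ d₁) with hG'def
        have hG'sub : ∀ X ∈ G', X ∈ F₁ := fun X hX => (Finset.mem_filter.mp hX).1
        have hG'ge : ∀ X ∈ G', d₂ ≤ X.card :=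
          fun X hX => hmin₁ X (hG'sub X hX) (Finset.mem_filter.mp hX).2
        have hG'card : G'.card = k - 2 := by
          rw [hG'def, aux_filter_ne_card hinj₁ hd₁mem]
          omega
        apply hY'
        refine aux_buildYk' hk hG'card (fun X hX => (Finset.mem_inter.mp (hG'sub X hX)).1)
          hS𝒜 hT𝒜 hD₁𝒜 hA₁𝒜
          (fun X hX Y hY h => hchain₁ X (hG'sub X hX) Y (hG'sub Y hY) h)
          (fun X hX => hDsubS X (hG'sub X hX))
          (fun X hX => hDlt X (hG'sub X hX))
          hST hSTcard
          (fun X hX => hchain₁ D₁ hD₁F X (hG'sub X hX) (by have := hG'ge X hX; omega))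
          ?_
          (hDsubS D₁ hD₁F) (hG₀S A₁ hA₁G)
          (fun X hX => by have := hG'ge X hX; omega)
          (fun X hX => by have := hG'ge X hX; omega)
          (hDlt D₁ hD₁F) (hG₀lt A₁ hA₁G)
          ?_
        · intro X hX
          obtain ⟨m, hm1, hm2, hcm, hXe⟩ := hrep₁ X (hG'sub X hX)
          obtain ⟨ma, hma1, hma2, hcma, hA₁e⟩ := hrep₀ A₁ (hG₀sub A₁ hA₁G)
          have hge := hG'ge X hX
          rw [hA₁e, hXe]
          exact aux_elt_subset σ i (c₁ := 0) (c₂ := 1) (by omega) (by omega)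
        · refine Ne.symm (hneXY (c₁ := 0) (c₂ := 1) (by omega) (by omega) ?_ ?_)
          · rw [← h0eq]; exact hG₀sub A₁ hA₁G
          · rw [← h1eq]; exact hD₁F
      · -- D₁ fits below the second-smallest member of G₀
        set G' := G₀.filter (fun X => X.card ≠ a₁) with hG'def
        have hG'sub : ∀ X ∈ G', X ∈ G₀ := fun X hX => (Finset.mem_filter.mp hX).1
        have hG'ge : ∀ X ∈ G', a₂ ≤ X.card :=
          fun X hX => hmin₀ X (hG'sub X hX) (Finset.mem_filter.mp hX).2
        have hG'card : G'.card = k - 2 := by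
          rw [hG'def, aux_filter_ne_card
            (fun X hX Y hY h => hinj₀ X (hG₀sub X hX) Y (hG₀sub Y hY) h)
            ha₁mem]
          omega
        apply hY'
        refine aux_buildYk' hk hG'card (fun X hX => hG₀𝒜 X (hG'sub X hX))
          hS𝒜 hT𝒜 hA₁𝒜 hD₁𝒜
          (fun X hX Y hY h => hG₀chain X (hG'sub X hX) Y (hG'sub Y hY) h)
          (fun X hX => hG₀S X (hG'sub X hX))
          (fun X hX => hG₀lt X (hG'sub X hX))
          hST hSTcard
          (fun X hX => hG₀chain A₁ hA₁G X (hG'sub X hX) (by have := hG'ge X hX; omega))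
          ?_
          (hG₀S A₁ hA₁G) (hDsubS D₁ hD₁F)
          (fun X hX => by have := hG'ge X hX; omega)
          (fun X hX => by have := hG'ge X hX; omega)
          (hG₀lt A₁ hA₁G) (hDlt D₁ hD₁F)
          ?_
        · intro X hX
          obtain ⟨m, hm1, hm2, hcm, hXe⟩ := hrep₀ X (hG₀sub X (hG'sub X hX))
          obtain ⟨md, hmd1, hmd2, hcmd, hD₁e⟩ := hrep₁ D₁ hD₁F
          have hge := hG'ge X hX
          rw [hD₁e, hXe]
          exact aux_elt_subset σ i (c₁ := 1) (c₂ := 0) (by omega) (by omega)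
        · refine hneXY (c₁ := 0) (c₂ := 1) (by omega) (by omega) ?_ ?_
          · rw [← h0eq]; exact hG₀sub A₁ hA₁G
          · rw [← h1eq]; exact hD₁F
  · -- s = t + 1 : everything in F₁ lies below S'
    have hDsubS' : ∀ D ∈ F₁, D ⊆ S' := by
      intro D hD
      obtain ⟨m, hm1, hm2, hcm, hDe⟩ := hrep₁ D hD
      have hb := claimA D hD
      rw [hDe, hS'e]
      exact aux_elt_subset σ i (c₁ := 1) (c₂ := 2) (by omega) (by omega)
    have hDlt : ∀ D ∈ F₁, D.card < S'.card := by
      intro D hD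
      have := claimA D hD
      omega
    rcases Nat.lt_or_ge k 3 with hk3 | hk3
    · -- k = 2
      obtain ⟨E₁, hE₁⟩ := Finset.card_pos.mp (show 0 < G₂.card by omega)
      obtain ⟨D₁, hD₁⟩ := Finset.card_pos.mp (show 0 < F₁.card by omega)
      apply hY'
      refine aux_buildYk' (G := (∅ : Finset (Finset (Fin n)))) hk (by simp; omega)
        (by simp) hS'𝒜 hT'𝒜 ((Finset.mem_inter.mp hD₁).1) (hG₂𝒜 E₁ hE₁)
        (by simp) (by simp) (by simp) hS'T' hS'T'card (by simp) (by simp)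
        (hDsubS' D₁ hD₁) (hG₂S' E₁ hE₁) (by simp) (by simp)
        (hDlt D₁ hD₁) (hG₂lt E₁ hE₁) ?_
      refine hneXY (c₁ := 1) (c₂ := 2) (by omega) (by omega) ?_ ?_
      · rw [← h1eq]; exact hD₁
      · rw [← h2eq]; exact hG₂sub E₁ hE₁
    · -- k ≥ 3
      obtain ⟨d₁, d₂, hd₁mem, hd12, hmin₁⟩ := aux_two_smallest hinj₁ hF1card (by omega)
      obtain ⟨u₁, u₂, hu₁mem, hu12, hmin₂⟩ := aux_two_smallest
        (fun X hX Y hY h => hinj₂ X (hG₂sub X hX) Y (hG₂sub Y hY) h) hG₂card (by omega)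
      set D₁ := aux_pick F₁ d₁ with hD₁def
      set E₁ := aux_pick G₂ u₁ with hE₁def
      have hD₁F : D₁ ∈ F₁ := (aux_pick_spec hd₁mem).1
      have hD₁c : D₁.card = d₁ := (aux_pick_spec hd₁mem).2
      have hE₁G : E₁ ∈ G₂ := (aux_pick_spec hu₁mem).1
      have hE₁c : E₁.card = u₁ := (aux_pick_spec hu₁mem).2
      have hD₁𝒜 : D₁ ∈ 𝒜 := (Finset.mem_inter.mp hD₁F).1
      have hE₁𝒜 : E₁ ∈ 𝒜 := hG₂𝒜 E₁ hE₁G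
      have hdich : (d₁ + 1 ≤ u₂ ∧ (d₁ % 2 = 1 ∨ d₁ + 2 ≤ u₂)) ∨
          (u₁ + 1 ≤ d₂ ∧ (u₁ % 2 = 0 ∨ u₁ + 2 ≤ d₂)) := by omega
      rcases hdich with ⟨hc1, hc2⟩ | ⟨hc1, hc2⟩
      · -- D₁ fits below the second-smallest member of G₂
        set G' := G₂.filter (fun X => X.card ≠ u₁) with hG'def
        have hG'sub : ∀ X ∈ G', X ∈ G₂ := fun X hX => (Finset.mem_filter.mp hX).1
        have hG'ge : ∀ X ∈ G', u₂ ≤ X.card :=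
          fun X hX => hmin₂ X (hG'sub X hX) (Finset.mem_filter.mp hX).2
        have hG'card : G'.card = k - 2 := by
          rw [hG'def, aux_filter_ne_card
            (fun X hX Y hY h => hinj₂ X (hG₂sub X hX) Y (hG₂sub Y hY) h)
            hu₁mem]
          omega
        apply hY'
        refine aux_buildYk' hk hG'card (fun X hX => hG₂𝒜 X (hG'sub X hX))
          hS'𝒜 hT'𝒜 hE₁𝒜 hD₁𝒜
          (fun X hX Y hY h => hG₂chain X (hG'sub X hX) Y (hG'sub Y hY) h)
          (fun X hX => hG₂S' X (hG'sub X hX))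
          (fun X hX => hG₂lt X (hG'sub X hX))
          hS'T' hS'T'card
          (fun X hX => hG₂chain E₁ hE₁G X (hG'sub X hX) (by have := hG'ge X hX; omega))
          ?_
          (hG₂S' E₁ hE₁G) (hDsubS' D₁ hD₁F)
          (fun X hX => by have := hG'ge X hX; omega)
          (fun X hX => by have := hG'ge X hX; omega)
          (hG₂lt E₁ hE₁G) (hDlt D₁ hD₁F)
          ?_
        · intro X hX
          obtain ⟨m, hm1, hm2, hcm, hXe⟩ := hrep₂ X (hG₂sub X (hG'sub X hX))
          obtain ⟨md, hmd1, hmd2, hcmd, hD₁e⟩ := hrep₁ D₁ hD₁F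
          have hge := hG'ge X hX
          rw [hD₁e, hXe]
          exact aux_elt_subset σ i (c₁ := 1) (c₂ := 2) (by omega) (by omega)
        · refine Ne.symm (hneXY (c₁ := 1) (c₂ := 2) (by omega) (by omega) ?_ ?_)
          · rw [← h1eq]; exact hD₁F
          · rw [← h2eq]; exact hG₂sub E₁ hE₁G
      · -- E₁ fits below the second-smallest member of F₁
        set G' := F₁.filter (fun X => X.card ≠ d₁) with hG'def
        have hG'sub : ∀ X ∈ G', X ∈ F₁ := fun X hX => (Finset.mem_filter.mp hX).1
        have hG'ge : ∀ X ∈ G', d₂ ≤ X.card :=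
          fun X hX => hmin₁ X (hG'sub X hX) (Finset.mem_filter.mp hX).2
        have hG'card : G'.card = k - 2 := by
          rw [hG'def, aux_filter_ne_card hinj₁ hd₁mem]
          omega
        apply hY'
        refine aux_buildYk' hk hG'card (fun X hX => (Finset.mem_inter.mp (hG'sub X hX)).1)
          hS'𝒜 hT'𝒜 hD₁𝒜 hE₁𝒜
          (fun X hX Y hY h => hchain₁ X (hG'sub X hX) Y (hG'sub Y hY) h)
          (fun X hX => hDsubS' X (hG'sub X hX))
          (fun X hX => hDlt X (hG'sub X hX))
          hS'T' hS'T'card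
          (fun X hX => hchain₁ D₁ hD₁F X (hG'sub X hX) (by have := hG'ge X hX; omega))
          ?_
          (hDsubS' D₁ hD₁F) (hG₂S' E₁ hE₁G)
          (fun X hX => by have := hG'ge X hX; omega)
          (fun X hX => by have := hG'ge X hX; omega)
          (hDlt D₁ hD₁F) (hG₂lt E₁ hE₁G)
          ?_
        · intro X hX
          obtain ⟨m, hm1, hm2, hcm, hXe⟩ := hrep₁ X (hG'sub X hX)
          obtain ⟨mu, hmu1, hmu2, hcmu, hE₁e⟩ := hrep₂ E₁ (hG₂sub E₁ hE₁G)
          have hge := hG'ge X hX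
          rw [hE₁e, hXe]
          exact aux_elt_subset σ i (c₁ := 2) (c₂ := 1) (by omega) (by omega)
        · refine hneXY (c₁ := 1) (c₂ := 2) (by omega) (by omega) ?_ ?_
          · rw [← h1eq]; exact hD₁F
          · rw [← h2eq]; exact hG₂sub E₁ hE₁G
  · -- t + 2 ≤ s : S ⊂ S', Y_k from chain i with tops T and S'
    apply hY
    refine aux_buildYk hk hG₀card hG₀𝒜 hS𝒜 hT𝒜 hS'𝒜
      hG₀chain hG₀S hG₀lt hST ?_ hSTcard (by omega) ?_
    · rw [hSe, hS'e]
      exact aux_elt_subset σ i (c₁ := 0) (c₂ := 2) (by omega) (by omega)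
    · refine hneXY (c₁ := 0) (c₂ := 2) (by omega) (by omega) ?_ ?_
      · rw [← h0eq]; exact hT₀
      · rw [← h2eq]; exact hS'₂
end

section
/- Let σ be a cyclic permutation of [n] and let A be a collection of intervals along σ that contains neither Y nor Y' as an induced subposet. Then |A| ≤ 2n. -/
open Finset

/-- The family `𝒜` contains `Y` as an induced subposet: four pairwise distinct sets
`w, x, y, z ∈ 𝒜` with `w ⊆ x`, `x ⊆ y`, `x ⊆ z`, `y ⊄ z` and `z ⊄ y`. -/
def ContainsInducedY {n : ℕ} (𝒜 : Finset (Finset (Fin n))) : Prop :=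
  ∃ w x y z : Finset (Fin n),
    w ∈ 𝒜 ∧ x ∈ 𝒜 ∧ y ∈ 𝒜 ∧ z ∈ 𝒜 ∧
    w ≠ x ∧ w ≠ y ∧ w ≠ z ∧ x ≠ y ∧ x ≠ z ∧ y ≠ z ∧
    w ⊆ x ∧ x ⊆ y ∧ x ⊆ z ∧ ¬ y ⊂ z ∧ ¬ z ⊂ y

/-- The family `𝒜` contains `Y'` as an induced subposet: four pairwise distinct sets
`w, x, y, z ∈ 𝒜` with `x ⊆ w`, `y ⊆ x`, `z ⊆ x`, `y ⊄ z` and `z ⊄ y`. -/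
def ContainsInducedY' {n : ℕ} (𝒜 : Finset (Finset (Fin n))) : Prop :=
  ∃ w x y z : Finset (Fin n),
    w ∈ 𝒜 ∧ x ∈ 𝒜 ∧ y ∈ 𝒜 ∧ z ∈ 𝒜 ∧
    w ≠ x ∧ w ≠ y ∧ w ≠ z ∧ x ≠ y ∧ x ≠ z ∧ y ≠ z ∧
    x ⊆ w ∧ y ⊆ x ∧ z ⊆ x ∧ ¬ y ⊂ z ∧ ¬ z ⊂ y

namespace CycAux

/-- chosen starting point and length for an interval -/
noncomputable def idx (n : ℕ) (σ : ZMod n ≃ Fin n) (I : Finset (Fin n)) : ZMod n × ℕ :=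
  Classical.epsilon (fun p : ZMod n × ℕ => p.2 ≤ n - 2 ∧ I = cycInterval n σ p.1 p.2)

noncomputable def eL (n : ℕ) (σ : ZMod n ≃ Fin n) (I : Finset (Fin n)) : ZMod n :=
  (idx n σ I).1

noncomputable def eT (n : ℕ) (σ : ZMod n ≃ Fin n) (I : Finset (Fin n)) : ℕ :=
  (idx n σ I).2

noncomputable def eR (n : ℕ) (σ : ZMod n ≃ Fin n) (I : Finset (Fin n)) : ZMod n :=
  eL n σ I + (eT n σ I : ZMod n)

lemma eR_def (n : ℕ) (σ : ZMod n ≃ Fin n) (I : Finset (Fin n)) :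
    eR n σ I = eL n σ I + (eT n σ I : ZMod n) := rfl

variable {n : ℕ} (σ : ZMod n ≃ Fin n)

lemma idx_spec {I : Finset (Fin n)} (h : IsCycInterval n σ I) :
    eT n σ I ≤ n - 2 ∧ I = cycInterval n σ (eL n σ I) (eT n σ I) := by
  obtain ⟨i, t, ht, hEq⟩ := h
  exact Classical.epsilon_spec
    (p := fun p : ZMod n × ℕ => p.2 ≤ n - 2 ∧ I = cycInterval n σ p.1 p.2) ⟨(i, t), ht, hEq⟩

lemma mem_cyc (hn : 2 ≤ n) {i : ZMod n} {t : ℕ} (ht : t ≤ n - 2) (x : Fin n) :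
    x ∈ cycInterval n σ i t ↔ (σ.symm x - i).val ≤ t := by
  haveI : NeZero n := ⟨by omega⟩
  simp only [cycInterval, Finset.mem_image, Finset.mem_range]
  constructor
  · rintro ⟨s, hs, rfl⟩
    rw [Equiv.symm_apply_apply]
    have h1 : i + (s : ZMod n) - i = (s : ZMod n) := by ring
    rw [h1, ZMod.val_natCast, Nat.mod_eq_of_lt (by omega)]
    omega
  · intro hx
    refine ⟨(σ.symm x - i).val, by have := ZMod.val_lt (σ.symm x - i); omega, ?_⟩
    rw [ZMod.natCast_zmod_val]
    have h1 : i + (σ.symm x - i) = σ.symm x := by ring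
    rw [h1, Equiv.apply_symm_apply]

lemma subset_cyc (hn : 2 ≤ n) {i i' : ZMod n} {t t' : ℕ} (ht : t ≤ n - 2) (ht' : t' ≤ n - 2) :
    cycInterval n σ i t ⊆ cycInterval n σ i' t' ↔ (i - i').val + t ≤ t' := by
  haveI : NeZero n := ⟨by omega⟩
  have hd : (i - i').val < n := ZMod.val_lt _
  constructor
  · intro hsub
    by_contra hcon
    push_neg at hcon
    rcases Nat.le_total t (n - 1 - (i - i').val) with hs | hs
    · have hmem : σ (i + (t : ZMod n)) ∈ cycInterval n σ i t := by
        rw [mem_cyc σ hn ht, Equiv.symm_apply_apply]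
        have h1 : i + (t : ZMod n) - i = (t : ZMod n) := by ring
        rw [h1, ZMod.val_natCast, Nat.mod_eq_of_lt (by omega)]
      have h2 := (mem_cyc σ hn ht' _).mp (hsub hmem)
      rw [Equiv.symm_apply_apply] at h2
      have h3 : i + (t : ZMod n) - i' = (((i - i').val + t : ℕ) : ZMod n) := by
        rw [Nat.cast_add, ZMod.natCast_zmod_val]
        ring
      rw [h3, ZMod.val_natCast, Nat.mod_eq_of_lt (by omega)] at h2
      omega
    · set s := n - 1 - (i - i').val with hsdef
      have hmem : σ (i + (s : ZMod n)) ∈ cycInterval n σ i t := by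
        rw [mem_cyc σ hn ht, Equiv.symm_apply_apply]
        have h1 : i + (s : ZMod n) - i = (s : ZMod n) := by ring
        rw [h1, ZMod.val_natCast, Nat.mod_eq_of_lt (by omega)]
        omega
      have h2 := (mem_cyc σ hn ht' _).mp (hsub hmem)
      rw [Equiv.symm_apply_apply] at h2
      have h3 : i + (s : ZMod n) - i' = (((i - i').val + s : ℕ) : ZMod n) := by
        rw [Nat.cast_add, ZMod.natCast_zmod_val]
        ring
      rw [h3, ZMod.val_natCast, Nat.mod_eq_of_lt (by omega)] at h2
      omega
  · intro hle x hx
    rw [mem_cyc σ hn ht] at hx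
    rw [mem_cyc σ hn ht']
    have h3 : σ.symm x - i' = (((σ.symm x - i).val + (i - i').val : ℕ) : ZMod n) := by
      rw [Nat.cast_add, ZMod.natCast_zmod_val, ZMod.natCast_zmod_val]
      ring
    rw [h3, ZMod.val_natCast, Nat.mod_eq_of_lt (by omega)]
    omega

lemma subset_iff (hn : 2 ≤ n) {I J : Finset (Fin n)}
    (hI : IsCycInterval n σ I) (hJ : IsCycInterval n σ J) :
    I ⊆ J ↔ (eL n σ I - eL n σ J).val + eT n σ I ≤ eT n σ J := by
  conv_lhs => rw [(idx_spec σ hI).2, (idx_spec σ hJ).2]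
  exact subset_cyc σ hn (idx_spec σ hI).1 (idx_spec σ hJ).1

lemma eT_le_of_subset (hn : 2 ≤ n) {I J : Finset (Fin n)}
    (hI : IsCycInterval n σ I) (hJ : IsCycInterval n σ J) (h : I ⊆ J) :
    eT n σ I ≤ eT n σ J := by
  have := (subset_iff σ hn hI hJ).mp h
  omega

lemma left_mem (hn : 2 ≤ n) {I : Finset (Fin n)} (hI : IsCycInterval n σ I) :
    σ (eL n σ I) ∈ I := by
  haveI : NeZero n := ⟨by omega⟩
  have h2 := (idx_spec σ hI).2
  have hmem : σ (eL n σ I) ∈ cycInterval n σ (eL n σ I) (eT n σ I) := by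
    rw [mem_cyc σ hn (idx_spec σ hI).1, Equiv.symm_apply_apply, sub_self, ZMod.val_zero]
    exact Nat.zero_le _
  rw [← h2] at hmem
  exact hmem

lemma right_mem (hn : 2 ≤ n) {I : Finset (Fin n)} (hI : IsCycInterval n σ I) :
    σ (eR n σ I) ∈ I := by
  haveI : NeZero n := ⟨by omega⟩
  have htI := (idx_spec σ hI).1
  have h2 := (idx_spec σ hI).2
  have hmem : σ (eR n σ I) ∈ cycInterval n σ (eL n σ I) (eT n σ I) := by
    rw [mem_cyc σ hn htI, Equiv.symm_apply_apply, eR_def]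
    have h1 : eL n σ I + (eT n σ I : ZMod n) - eL n σ I = ((eT n σ I : ℕ) : ZMod n) := by ring
    rw [h1, ZMod.val_natCast, Nat.mod_eq_of_lt (by omega)]
  rw [← h2] at hmem
  exact hmem

lemma eq_of_LT (hn : 2 ≤ n) {I J : Finset (Fin n)}
    (hI : IsCycInterval n σ I) (hJ : IsCycInterval n σ J)
    (hL : eL n σ I = eL n σ J) (hT : eT n σ I = eT n σ J) : I = J := by
  rw [(idx_spec σ hI).2, (idx_spec σ hJ).2, hL, hT]

lemma eq_of_LR (hn : 2 ≤ n) {I J : Finset (Fin n)}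
    (hI : IsCycInterval n σ I) (hJ : IsCycInterval n σ J)
    (hL : eL n σ I = eL n σ J) (hR : eR n σ I = eR n σ J) : I = J := by
  haveI : NeZero n := ⟨by omega⟩
  have htI := (idx_spec σ hI).1
  have htJ := (idx_spec σ hJ).1
  have h1 : ((eT n σ I : ℕ) : ZMod n) = ((eT n σ J : ℕ) : ZMod n) := by
    rw [eR_def, eR_def, hL] at hR
    exact add_left_cancel hR
  have h2 : eT n σ I = eT n σ J := by
    have := congrArg ZMod.val h1
    rwa [ZMod.val_natCast, ZMod.val_natCast, Nat.mod_eq_of_lt (by omega),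
      Nat.mod_eq_of_lt (by omega)] at this
  exact eq_of_LT σ hn hI hJ hL h2

lemma subset_of_L_le (hn : 2 ≤ n) {I J : Finset (Fin n)}
    (hI : IsCycInterval n σ I) (hJ : IsCycInterval n σ J)
    (hL : eL n σ I = eL n σ J) (hT : eT n σ I ≤ eT n σ J) : I ⊆ J := by
  rw [subset_iff σ hn hI hJ, hL, sub_self, ZMod.val_zero]
  omega

lemma comp_of_L (hn : 2 ≤ n) {I J : Finset (Fin n)}
    (hI : IsCycInterval n σ I) (hJ : IsCycInterval n σ J)
    (hL : eL n σ I = eL n σ J) : I ⊆ J ∨ J ⊆ I := by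
  rcases le_total (eT n σ I) (eT n σ J) with h | h
  · exact Or.inl (subset_of_L_le σ hn hI hJ hL h)
  · exact Or.inr (subset_of_L_le σ hn hJ hI hL.symm h)

lemma subset_of_R_le (hn : 2 ≤ n) {I J : Finset (Fin n)}
    (hI : IsCycInterval n σ I) (hJ : IsCycInterval n σ J)
    (hR : eR n σ I = eR n σ J) (hT : eT n σ I ≤ eT n σ J) : I ⊆ J := by
  haveI : NeZero n := ⟨by omega⟩
  have htJ := (idx_spec σ hJ).1
  have hkey : eL n σ I - eL n σ J = ((eT n σ J - eT n σ I : ℕ) : ZMod n) := by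
    rw [Nat.cast_sub hT]
    rw [eR_def, eR_def] at hR
    linear_combination hR
  rw [subset_iff σ hn hI hJ, hkey, ZMod.val_natCast, Nat.mod_eq_of_lt (by omega)]
  omega

lemma comp_of_R (hn : 2 ≤ n) {I J : Finset (Fin n)}
    (hI : IsCycInterval n σ I) (hJ : IsCycInterval n σ J)
    (hR : eR n σ I = eR n σ J) : I ⊆ J ∨ J ⊆ I := by
  rcases le_total (eT n σ I) (eT n σ J) with h | h
  · exact Or.inl (subset_of_R_le σ hn hI hJ hR h)
  · exact Or.inr (subset_of_R_le σ hn hJ hI hR.symm h)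

lemma L_eq_of (hn : 2 ≤ n) {I J : Finset (Fin n)}
    (hI : IsCycInterval n σ I) (hJ : IsCycInterval n σ J)
    (hsub : I ⊆ J) (hmem : σ (eL n σ J) ∈ I) : eL n σ I = eL n σ J := by
  haveI : NeZero n := ⟨by omega⟩
  have htI := (idx_spec σ hI).1
  have htJ := (idx_spec σ hJ).1
  have hs := (subset_iff σ hn hI hJ).mp hsub
  have hm0 : σ (eL n σ J) ∈ cycInterval n σ (eL n σ I) (eT n σ I) := by
    rw [← (idx_spec σ hI).2]; exact hmem
  have hm := (mem_cyc σ hn htI _).mp hm0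
  rw [Equiv.symm_apply_apply] at hm
  set d := (eL n σ I - eL n σ J).val with hdd
  set e := (eL n σ J - eL n σ I).val with hee
  have h0 : ((d + e : ℕ) : ZMod n) = 0 := by
    rw [Nat.cast_add, hdd, hee, ZMod.natCast_zmod_val, ZMod.natCast_zmod_val]
    ring
  have hdvd := (ZMod.natCast_eq_zero_iff _ _).mp h0
  have hd : d < n := ZMod.val_lt _
  have he : e < n := ZMod.val_lt _
  obtain ⟨c, hc⟩ := hdvd
  have hcases : d + e = 0 ∨ d + e = n := by
    rcases Nat.lt_or_ge c 2 with h | h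
    · interval_cases c <;> omega
    · have h5 : n * 2 ≤ n * c := Nat.mul_le_mul_left n h
      omega
  have hd0 : d = 0 := by omega
  have hz : eL n σ I - eL n σ J = 0 := by
    rw [hdd] at hd0
    exact (ZMod.val_eq_zero _).mp hd0
  exact sub_eq_zero.mp hz

lemma R_eq_of (hn : 2 ≤ n) {I J : Finset (Fin n)}
    (hI : IsCycInterval n σ I) (hJ : IsCycInterval n σ J)
    (hsub : I ⊆ J) (hmem : σ (eR n σ J) ∈ I) : eR n σ I = eR n σ J := by
  haveI : NeZero n := ⟨by omega⟩
  have htI := (idx_spec σ hI).1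
  have htJ := (idx_spec σ hJ).1
  have hs := (subset_iff σ hn hI hJ).mp hsub
  set d := (eL n σ I - eL n σ J).val with hdd
  have hd : d < n := by rw [hdd]; exact ZMod.val_lt _
  have hdc : ((d : ℕ) : ZMod n) = eL n σ I - eL n σ J := by
    rw [hdd]; exact ZMod.natCast_zmod_val _
  have hm0 : σ (eR n σ J) ∈ cycInterval n σ (eL n σ I) (eT n σ I) := by
    rw [← (idx_spec σ hI).2]; exact hmem
  have hm := (mem_cyc σ hn htI _).mp hm0
  rw [Equiv.symm_apply_apply] at hm
  have h3 : eR n σ J - eL n σ I = ((eT n σ J - d : ℕ) : ZMod n) := by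
    rw [Nat.cast_sub (by omega : d ≤ eT n σ J), hdc, eR_def]
    ring
  rw [h3, ZMod.val_natCast, Nat.mod_eq_of_lt (by omega)] at hm
  rw [eR_def, eR_def]
  have htJeq : eT n σ J = d + eT n σ I := by omega
  rw [htJeq]
  push_cast
  linear_combination -hdc

lemma Y_mono {A B : Finset (Finset (Fin n))} (h : A ⊆ B) :
    ContainsInducedY A → ContainsInducedY B := by
  rintro ⟨w, x, y, z, h1, h2, h3, h4, rest⟩
  exact ⟨w, x, y, z, h h1, h h2, h h3, h h4, rest⟩

lemma Y'_mono {A B : Finset (Finset (Fin n))} (h : A ⊆ B) :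
    ContainsInducedY' A → ContainsInducedY' B := by
  rintro ⟨w, x, y, z, h1, h2, h3, h4, rest⟩
  exact ⟨w, x, y, z, h h1, h h2, h h3, h h4, rest⟩

lemma not_ssub {s t : Finset (Fin n)} (h : ¬ s ⊆ t) : ¬ s ⊂ t :=
  fun hc => h hc.subset

lemma core1 (hn : 2 ≤ n) (A : Finset (Finset (Fin n)))
    (hInt : ∀ I ∈ A, IsCycInterval n σ I)
    (hY : ¬ ContainsInducedY A) (hY' : ¬ ContainsInducedY' A)
    (hR2 : ∀ I ∈ A, ∃ J ∈ A, J ≠ I ∧ eR n σ J = eR n σ I)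
    {I1 I2 I3 : Finset (Fin n)} (m1 : I1 ∈ A) (m2 : I2 ∈ A) (m3 : I3 ∈ A)
    (h12 : eL n σ I1 = eL n σ I2) (h23 : eL n σ I2 = eL n σ I3)
    (t12 : eT n σ I1 < eT n σ I2) (t23 : eT n σ I2 < eT n σ I3) : False := by
  have hI1 := hInt I1 m1
  have hI2 := hInt I2 m2
  have hI3 := hInt I3 m3
  have s12 : I1 ⊆ I2 := subset_of_L_le σ hn hI1 hI2 h12 (le_of_lt t12)
  have s23 : I2 ⊆ I3 := subset_of_L_le σ hn hI2 hI3 h23 (le_of_lt t23)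
  have n12 : I1 ≠ I2 := by intro h; rw [h] at t12; omega
  have n23 : I2 ≠ I3 := by intro h; rw [h] at t23; omega
  have n13 : I1 ≠ I3 := by intro h; rw [h] at t12; omega
  obtain ⟨J, hJA, hJne, hJr⟩ := hR2 I2 m2
  have hJc := hInt J hJA
  rcases comp_of_R σ hn hJc hI2 hJr with hJsub | hsupJ
  · -- J ⊆ I2 : produce Y'
    have hn1 : ¬ J ⊆ I1 := by
      intro h
      have hm : σ (eR n σ I2) ∈ I1 := by
        have hr := right_mem σ hn hJc
        rw [hJr] at hr
        exact h hr
      have hre := R_eq_of σ hn hI1 hI2 s12 hm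
      exact n12 (eq_of_LR σ hn hI1 hI2 h12 hre)
    have hn2 : ¬ I1 ⊆ J := by
      intro h
      have hm : σ (eL n σ I2) ∈ J := by
        have hl := left_mem σ hn hI1
        rw [h12] at hl
        exact h hl
      have hle := L_eq_of σ hn hJc hI2 hJsub hm
      exact hJne (eq_of_LR σ hn hJc hI2 hle hJr)
    apply hY'
    refine ⟨I3, I2, J, I1, m3, m2, hJA, m1, ?_, ?_, ?_, ?_, ?_, ?_, s23, hJsub, s12,
      not_ssub hn1, not_ssub hn2⟩
    · intro h; rw [h] at t23; omega
    · intro h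
      have := eT_le_of_subset σ hn hI3 hI2 (h ▸ hJsub)
      omega
    · intro h; rw [h] at t23; omega
    · exact fun h => hJne h.symm
    · exact fun h => n12 h.symm
    · intro h; exact hn1 (by rw [h])
  · -- I2 ⊆ J : produce Y
    have hn3 : ¬ J ⊆ I3 := by
      intro h
      have hm : σ (eL n σ I3) ∈ J := by
        have hl := left_mem σ hn hI2
        rw [h23] at hl
        exact hsupJ hl
      have hLJ := L_eq_of σ hn hJc hI3 h hm
      exact hJne (eq_of_LR σ hn hJc hI2 (hLJ.trans h23.symm) hJr)
    have hn4 : ¬ I3 ⊆ J := by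
      intro h
      have hm : σ (eR n σ J) ∈ I3 := by
        have hr := right_mem σ hn hI2
        rw [← hJr] at hr
        exact s23 hr
      have hre := R_eq_of σ hn hI3 hJc h hm
      have h32 : I3 = I2 := eq_of_LR σ hn hI3 hI2 h23.symm (hre.trans hJr)
      rw [h32] at t23; omega
    apply hY
    refine ⟨I1, I2, J, I3, m1, m2, hJA, m3, n12, ?_, n13, ?_, n23, ?_, s12, hsupJ, s23,
      not_ssub hn3, not_ssub hn4⟩
    · intro h
      have := eT_le_of_subset σ hn hI2 hI1 (h ▸ hsupJ)
      omega
    · exact fun h => hJne h.symm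
    · intro h; exact hn3 (by rw [h])

lemma core2 (hn : 2 ≤ n) (A : Finset (Finset (Fin n)))
    (hInt : ∀ I ∈ A, IsCycInterval n σ I)
    (hY : ¬ ContainsInducedY A) (hY' : ¬ ContainsInducedY' A)
    (hL2 : ∀ I ∈ A, ∃ J ∈ A, J ≠ I ∧ eL n σ J = eL n σ I)
    {I1 I2 I3 : Finset (Fin n)} (m1 : I1 ∈ A) (m2 : I2 ∈ A) (m3 : I3 ∈ A)
    (h12 : eR n σ I1 = eR n σ I2) (h23 : eR n σ I2 = eR n σ I3)
    (t12 : eT n σ I1 < eT n σ I2) (t23 : eT n σ I2 < eT n σ I3) : False := by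
  have hI1 := hInt I1 m1
  have hI2 := hInt I2 m2
  have hI3 := hInt I3 m3
  have s12 : I1 ⊆ I2 := subset_of_R_le σ hn hI1 hI2 h12 (le_of_lt t12)
  have s23 : I2 ⊆ I3 := subset_of_R_le σ hn hI2 hI3 h23 (le_of_lt t23)
  have n12 : I1 ≠ I2 := by intro h; rw [h] at t12; omega
  have n23 : I2 ≠ I3 := by intro h; rw [h] at t23; omega
  have n13 : I1 ≠ I3 := by intro h; rw [h] at t12; omega
  obtain ⟨J, hJA, hJne, hJl⟩ := hL2 I2 m2
  have hJc := hInt J hJA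
  rcases comp_of_L σ hn hJc hI2 hJl with hJsub | hsupJ
  · -- J ⊆ I2 : produce Y'
    have hn1 : ¬ J ⊆ I1 := by
      intro h
      have hm : σ (eL n σ I2) ∈ I1 := by
        have hl := left_mem σ hn hJc
        rw [hJl] at hl
        exact h hl
      have hle := L_eq_of σ hn hI1 hI2 s12 hm
      exact n12 (eq_of_LR σ hn hI1 hI2 hle h12)
    have hn2 : ¬ I1 ⊆ J := by
      intro h
      have hm : σ (eR n σ I2) ∈ J := by
        have hr := right_mem σ hn hI1
        rw [h12] at hr
        exact h hr
      have hre := R_eq_of σ hn hJc hI2 hJsub hm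
      exact hJne (eq_of_LR σ hn hJc hI2 hJl hre)
    apply hY'
    refine ⟨I3, I2, J, I1, m3, m2, hJA, m1, ?_, ?_, ?_, ?_, ?_, ?_, s23, hJsub, s12,
      not_ssub hn1, not_ssub hn2⟩
    · intro h; rw [h] at t23; omega
    · intro h
      have := eT_le_of_subset σ hn hI3 hI2 (h ▸ hJsub)
      omega
    · intro h; rw [h] at t23; omega
    · exact fun h => hJne h.symm
    · exact fun h => n12 h.symm
    · intro h; exact hn1 (by rw [h])
  · -- I2 ⊆ J : produce Y
    have hn3 : ¬ J ⊆ I3 := by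
      intro h
      have hm : σ (eR n σ I3) ∈ J := by
        have hr := right_mem σ hn hI2
        rw [h23] at hr
        exact hsupJ hr
      have hre := R_eq_of σ hn hJc hI3 h hm
      exact hJne (eq_of_LR σ hn hJc hI2 hJl (hre.trans h23.symm))
    have hn4 : ¬ I3 ⊆ J := by
      intro h
      have hm : σ (eL n σ J) ∈ I3 := by
        have hl := left_mem σ hn hI2
        rw [← hJl] at hl
        exact s23 hl
      have hle := L_eq_of σ hn hI3 hJc h hm
      have h32 : I3 = I2 := eq_of_LR σ hn hI3 hI2 (hle.trans hJl) h23.symm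
      rw [h32] at t23; omega
    apply hY
    refine ⟨I1, I2, J, I3, m1, m2, hJA, m3, n12, ?_, n13, ?_, n23, ?_, s12, hsupJ, s23,
      not_ssub hn3, not_ssub hn4⟩
    · intro h
      have := eT_le_of_subset σ hn hI2 hI1 (h ▸ hsupJ)
      omega
    · exact fun h => hJne h.symm
    · intro h; exact hn3 (by rw [h])

lemma threeL (hn : 2 ≤ n) (A : Finset (Finset (Fin n)))
    (hInt : ∀ I ∈ A, IsCycInterval n σ I)
    (hY : ¬ ContainsInducedY A) (hY' : ¬ ContainsInducedY' A)
    (hR2 : ∀ I ∈ A, ∃ J ∈ A, J ≠ I ∧ eR n σ J = eR n σ I)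
    {a b c : Finset (Fin n)} (ha : a ∈ A) (hb : b ∈ A) (hc : c ∈ A)
    (hab : a ≠ b) (hac : a ≠ c) (hbc : b ≠ c)
    (lab : eL n σ a = eL n σ b) (lac : eL n σ a = eL n σ c) : False := by
  have lbc : eL n σ b = eL n σ c := lab.symm.trans lac
  rcases lt_trichotomy (eT n σ a) (eT n σ b) with h1 | h1 | h1
  · rcases lt_trichotomy (eT n σ b) (eT n σ c) with h2 | h2 | h2
    · exact core1 σ hn A hInt hY hY' hR2 ha hb hc lab lbc h1 h2
    · exact hbc (eq_of_LT σ hn (hInt b hb) (hInt c hc) lbc h2)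
    · rcases lt_trichotomy (eT n σ a) (eT n σ c) with h3 | h3 | h3
      · exact core1 σ hn A hInt hY hY' hR2 ha hc hb lac lbc.symm h3 h2
      · exact hac (eq_of_LT σ hn (hInt a ha) (hInt c hc) lac h3)
      · exact core1 σ hn A hInt hY hY' hR2 hc ha hb lac.symm lab h3 h1
  · exact hab (eq_of_LT σ hn (hInt a ha) (hInt b hb) lab h1)
  · rcases lt_trichotomy (eT n σ a) (eT n σ c) with h2 | h2 | h2
    · exact core1 σ hn A hInt hY hY' hR2 hb ha hc lab.symm lac h1 h2
    · exact hac (eq_of_LT σ hn (hInt a ha) (hInt c hc) lac h2)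
    · rcases lt_trichotomy (eT n σ b) (eT n σ c) with h3 | h3 | h3
      · exact core1 σ hn A hInt hY hY' hR2 hb hc ha lbc lac.symm h3 h2
      · exact hbc (eq_of_LT σ hn (hInt b hb) (hInt c hc) lbc h3)
      · exact core1 σ hn A hInt hY hY' hR2 hc hb ha lbc.symm lab.symm h3 h1

lemma threeR (hn : 2 ≤ n) (A : Finset (Finset (Fin n)))
    (hInt : ∀ I ∈ A, IsCycInterval n σ I)
    (hY : ¬ ContainsInducedY A) (hY' : ¬ ContainsInducedY' A)
    (hL2 : ∀ I ∈ A, ∃ J ∈ A, J ≠ I ∧ eL n σ J = eL n σ I)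
    {a b c : Finset (Fin n)} (ha : a ∈ A) (hb : b ∈ A) (hc : c ∈ A)
    (hab : a ≠ b) (hac : a ≠ c) (hbc : b ≠ c)
    (lab : eR n σ a = eR n σ b) (lac : eR n σ a = eR n σ c) : False := by
  have lbc : eR n σ b = eR n σ c := lab.symm.trans lac
  have eqLT : ∀ {x y : Finset (Fin n)}, x ∈ A → y ∈ A → eR n σ x = eR n σ y →
      eT n σ x = eT n σ y → x = y := by
    intro x y hx hy hr ht
    have : eL n σ x = eL n σ y := by
      rw [eR_def, eR_def, ht] at hr
      exact add_right_cancel hr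
    exact eq_of_LT σ hn (hInt x hx) (hInt y hy) this ht
  rcases lt_trichotomy (eT n σ a) (eT n σ b) with h1 | h1 | h1
  · rcases lt_trichotomy (eT n σ b) (eT n σ c) with h2 | h2 | h2
    · exact core2 σ hn A hInt hY hY' hL2 ha hb hc lab lbc h1 h2
    · exact hbc (eqLT hb hc lbc h2)
    · rcases lt_trichotomy (eT n σ a) (eT n σ c) with h3 | h3 | h3
      · exact core2 σ hn A hInt hY hY' hL2 ha hc hb lac lbc.symm h3 h2
      · exact hac (eqLT ha hc lac h3)
      · exact core2 σ hn A hInt hY hY' hL2 hc ha hb lac.symm lab h3 h1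
  · exact hab (eqLT ha hb lab h1)
  · rcases lt_trichotomy (eT n σ a) (eT n σ c) with h2 | h2 | h2
    · exact core2 σ hn A hInt hY hY' hL2 hb ha hc lab.symm lac h1 h2
    · exact hac (eqLT ha hc lac h2)
    · rcases lt_trichotomy (eT n σ b) (eT n σ c) with h3 | h3 | h3
      · exact core2 σ hn A hInt hY hY' hL2 hb hc ha lbc lac.symm h3 h2
      · exact hbc (eqLT hb hc lbc h3)
      · exact core2 σ hn A hInt hY hY' hL2 hc hb ha lbc.symm lab.symm h3 h1

lemma main_aux (hn : 2 ≤ n) :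
    ∀ (N : ℕ) (A : Finset (Finset (Fin n))), A.card ≤ N →
      (∀ I ∈ A, IsCycInterval n σ I) →
      ¬ ContainsInducedY A → ¬ ContainsInducedY' A →
      A.card ≤ (A.image (eL n σ)).card + (A.image (eR n σ)).card := by
  intro N
  induction N with
  | zero =>
    intro A hcard _ _ _
    have : A = ∅ := Finset.card_eq_zero.mp (Nat.le_zero.mp hcard)
    subst this
    simp
  | succ N ih =>
    intro A hcard hInt hY hY'
    classical
    by_cases hexL : ∃ I ∈ A, ∀ J ∈ A, eL n σ J = eL n σ I → J = I
    · obtain ⟨I, hIA, huniq⟩ := hexL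
      set A' := A.erase I with hA'
      have hsub : A' ⊆ A := Finset.erase_subset _ _
      have hpos : 0 < A.card := Finset.card_pos.mpr ⟨I, hIA⟩
      have hcardA' : A'.card = A.card - 1 := by rw [hA', Finset.card_erase_of_mem hIA]
      have ih' := ih A' (by omega) (fun J hJ => hInt J (hsub hJ))
        (fun hcY => hY (Y_mono hsub hcY)) (fun hcY => hY' (Y'_mono hsub hcY))
      have hLmem : eL n σ I ∈ A.image (eL n σ) := Finset.mem_image_of_mem _ hIA
      have h1 : A'.image (eL n σ) ⊆ (A.image (eL n σ)).erase (eL n σ I) := by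
        intro bb hbb
        obtain ⟨J, hJ, rfl⟩ := Finset.mem_image.mp hbb
        refine Finset.mem_erase.mpr ⟨?_, Finset.mem_image_of_mem _ (hsub hJ)⟩
        intro h
        exact (Finset.mem_erase.mp hJ).1 (huniq J (hsub hJ) h)
      have c1 : (A'.image (eL n σ)).card ≤ (A.image (eL n σ)).card - 1 := by
        calc (A'.image (eL n σ)).card ≤ ((A.image (eL n σ)).erase (eL n σ I)).card :=
              Finset.card_le_card h1
          _ = (A.image (eL n σ)).card - 1 := Finset.card_erase_of_mem hLmem
      have c2 : (A'.image (eR n σ)).card ≤ (A.image (eR n σ)).card :=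
        Finset.card_le_card (Finset.image_subset_image hsub)
      have hposL : 0 < (A.image (eL n σ)).card := Finset.card_pos.mpr ⟨_, hLmem⟩
      omega
    · by_cases hexR : ∃ I ∈ A, ∀ J ∈ A, eR n σ J = eR n σ I → J = I
      · obtain ⟨I, hIA, huniq⟩ := hexR
        set A' := A.erase I with hA'
        have hsub : A' ⊆ A := Finset.erase_subset _ _
        have hpos : 0 < A.card := Finset.card_pos.mpr ⟨I, hIA⟩
        have hcardA' : A'.card = A.card - 1 := by rw [hA', Finset.card_erase_of_mem hIA]
        have ih' := ih A' (by omega) (fun J hJ => hInt J (hsub hJ))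
          (fun hcY => hY (Y_mono hsub hcY)) (fun hcY => hY' (Y'_mono hsub hcY))
        have hRmem : eR n σ I ∈ A.image (eR n σ) := Finset.mem_image_of_mem _ hIA
        have h1 : A'.image (eR n σ) ⊆ (A.image (eR n σ)).erase (eR n σ I) := by
          intro bb hbb
          obtain ⟨J, hJ, rfl⟩ := Finset.mem_image.mp hbb
          refine Finset.mem_erase.mpr ⟨?_, Finset.mem_image_of_mem _ (hsub hJ)⟩
          intro h
          exact (Finset.mem_erase.mp hJ).1 (huniq J (hsub hJ) h)
        have c1 : (A'.image (eR n σ)).card ≤ (A.image (eR n σ)).card - 1 := by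
          calc (A'.image (eR n σ)).card ≤ ((A.image (eR n σ)).erase (eR n σ I)).card :=
                Finset.card_le_card h1
            _ = (A.image (eR n σ)).card - 1 := Finset.card_erase_of_mem hRmem
        have c2 : (A'.image (eL n σ)).card ≤ (A.image (eL n σ)).card :=
          Finset.card_le_card (Finset.image_subset_image hsub)
        have hposR : 0 < (A.image (eR n σ)).card := Finset.card_pos.mpr ⟨_, hRmem⟩
        omega
      · push_neg at hexL hexR
        have hL2 : ∀ I ∈ A, ∃ J ∈ A, J ≠ I ∧ eL n σ J = eL n σ I := by
          intro I hI
          obtain ⟨J, hJ, hh1, hh2⟩ := hexL I hI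
          exact ⟨J, hJ, hh2, hh1⟩
        have hR2 : ∀ I ∈ A, ∃ J ∈ A, J ≠ I ∧ eR n σ J = eR n σ I := by
          intro I hI
          obtain ⟨J, hJ, hh1, hh2⟩ := hexR I hI
          exact ⟨J, hJ, hh2, hh1⟩
        have cardL : A.card = (A.image (eL n σ)).card * 2 := by
          rw [Finset.card_eq_sum_card_image (eL n σ) A]
          apply Finset.sum_const_nat
          intro b hb
          obtain ⟨I, hIA, rfl⟩ := Finset.mem_image.mp hb
          apply le_antisymm
          · by_contra hgt
            push_neg at hgt
            obtain ⟨x, hx, y, hy, z, hz, hxy, hxz, hyz⟩ := Finset.two_lt_card.mp hgt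
            have hx' := Finset.mem_filter.mp hx
            have hy' := Finset.mem_filter.mp hy
            have hz' := Finset.mem_filter.mp hz
            exact threeL σ hn A hInt hY hY' hR2 hx'.1 hy'.1 hz'.1 hxy hxz hyz
              (hx'.2.trans hy'.2.symm) (hx'.2.trans hz'.2.symm)
          · obtain ⟨J, hJA, hJne, hJL⟩ := hL2 I hIA
            exact Finset.one_lt_card.mpr ⟨I, Finset.mem_filter.mpr ⟨hIA, rfl⟩,
              J, Finset.mem_filter.mpr ⟨hJA, hJL⟩, fun h => hJne h.symm⟩
        have cardR : A.card = (A.image (eR n σ)).card * 2 := by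
          rw [Finset.card_eq_sum_card_image (eR n σ) A]
          apply Finset.sum_const_nat
          intro b hb
          obtain ⟨I, hIA, rfl⟩ := Finset.mem_image.mp hb
          apply le_antisymm
          · by_contra hgt
            push_neg at hgt
            obtain ⟨x, hx, y, hy, z, hz, hxy, hxz, hyz⟩ := Finset.two_lt_card.mp hgt
            have hx' := Finset.mem_filter.mp hx
            have hy' := Finset.mem_filter.mp hy
            have hz' := Finset.mem_filter.mp hz
            exact threeR σ hn A hInt hY hY' hL2 hx'.1 hy'.1 hz'.1 hxy hxz hyz
              (hx'.2.trans hy'.2.symm) (hx'.2.trans hz'.2.symm)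
          · obtain ⟨J, hJA, hJne, hJR⟩ := hR2 I hIA
            exact Finset.one_lt_card.mpr ⟨I, Finset.mem_filter.mpr ⟨hIA, rfl⟩,
              J, Finset.mem_filter.mpr ⟨hJA, hJR⟩, fun h => hJne h.symm⟩
        omega

end CycAux

/-- A collection of intervals along a cyclic permutation of `[n]` containing neither `Y`
nor `Y'` as an induced subposet has at most `2n` members. -/
theorem induced_Y_intervals_bound (n : ℕ) (σ : ZMod n ≃ Fin n)
    (𝒜 : Finset (Finset (Fin n))) (hInt : ∀ I ∈ 𝒜, IsCycInterval n σ I)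
    (hY : ¬ ContainsInducedY 𝒜) (hY' : ¬ ContainsInducedY' 𝒜) :
    𝒜.card ≤ 2 * n := by
  rcases Nat.lt_or_ge n 2 with hn | hn
  · interval_cases n
    · exact (σ 0).elim0
    · have hone : 𝒜.card ≤ 1 := by
        apply Finset.card_le_one.mpr
        intro a ha b hb
        obtain ⟨i, t, ht, hEq⟩ := hInt a ha
        obtain ⟨j, s, hs, hEq'⟩ := hInt b hb
        have ht0 : t = 0 := by omega
        have hs0 : s = 0 := by omega
        subst ht0; subst hs0
        rw [hEq, hEq', Subsingleton.elim i j]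
      omega
  · haveI : NeZero n := ⟨by omega⟩
    have hmain := CycAux.main_aux σ hn 𝒜.card 𝒜 le_rfl hInt hY hY'
    have hL : (𝒜.image (CycAux.eL n σ)).card ≤ n := by
      calc (𝒜.image (CycAux.eL n σ)).card ≤ Fintype.card (ZMod n) :=
            Finset.card_le_univ _
        _ = n := ZMod.card n
    have hR : (𝒜.image (CycAux.eR n σ)).card ≤ n := by
      calc (𝒜.image (CycAux.eR n σ)).card ≤ Fintype.card (ZMod n) :=
            Finset.card_le_univ _
        _ = n := ZMod.card n
    omega
end
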